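/- arXiv:1306.4437 — 7 statements merged into one kernel-verified Lean document; each statement's English description precedes it below -/
import Mathlib

section
/- Let b ∈ ℝ with b > 1/2, let A > 0 and s > 0. Then lim_{ε → 0⁺} ε^(b − 1/2) · ∫_{−s}^{s} (ε + A·x²)^(−b) dx = √(π/A) · Γ(b − 1/2)/Γ(b), where Γ denotes the Gamma function. -/
open Filter Topology Real

section aux
open MeasureTheory Set


-- integrability of (1+x^2)^(-b) on ℝ for b > 1/2
lemma cont_h (b : ℝ) : Continuous (fun x : ℝ => (1 + x ^ 2) ^ (-b)) := by
  apply Continuous.rpow_const (by continuity)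
  intro x; left; positivity

lemma integrable_h {b : ℝ} (hb : 1 / 2 < b) :
    Integrable (fun x : ℝ => (1 + x ^ 2) ^ (-b)) := by
  have hbne : -(2*b) < -1 := by linarith
  have hIoi : IntegrableOn (fun x : ℝ => (1 + x ^ 2) ^ (-b)) (Ioi 1) := by
    refine Integrable.mono (integrableOn_Ioi_rpow_of_lt hbne one_pos)
      (cont_h b).aestronglyMeasurable.restrict ?_
    filter_upwards [ae_restrict_mem measurableSet_Ioi] with x hx
    have hx1 : (1:ℝ) < x := hx
    have h0 : (0:ℝ) < x ^ 2 := by positivity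
    have : (1 + x ^ 2) ^ (-b) ≤ (x ^ 2) ^ (-b) :=
      rpow_le_rpow_of_nonpos h0 (by linarith) (by linarith)
    have heq : (x ^ 2 : ℝ) ^ (-b) = x ^ (-(2*b)) := by
      rw [← Real.rpow_natCast x 2, ← Real.rpow_mul (by positivity)]
      norm_num
    rw [Real.norm_eq_abs, Real.norm_eq_abs, abs_of_nonneg (by positivity),
      abs_of_nonneg (rpow_nonneg (by positivity) _)]
    calc (1 + x ^ 2) ^ (-b) ≤ (x^2) ^ (-b) := this
    _ = x ^ (-(2*b)) := heq
  have hIio : IntegrableOn (fun x : ℝ => (1 + x ^ 2) ^ (-b)) (Iio (-1)) := by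
    rw [show (Iio (-1:ℝ)) = (fun x : ℝ => -x) ⁻¹' (Ioi 1) by ext x; simp]
    have := ((integrable_indicator_iff measurableSet_Ioi).2 hIoi).comp_neg
    rw [← integrable_indicator_iff ((measurableSet_Ioi).preimage measurable_neg)]
    convert this using 1
    · rfl
    ext x
    simp only [Set.indicator_apply, mem_preimage, mem_Ioi]
    have hsq : (-x)^2 = x^2 := by ring
    by_cases h : x < -1
    · simp [Set.indicator_apply, mem_Iio, h, show (1:ℝ) < -x by linarith, hsq]
    · simp [Set.indicator_apply, mem_Iio, h, show ¬(1:ℝ) < -x from fun hc => h (by linarith), hsq]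
  have hIcc : IntegrableOn (fun x : ℝ => (1 + x ^ 2) ^ (-b)) (Icc (-1) 1) :=
    (cont_h b).integrableOn_Icc
  have : IntegrableOn (fun x : ℝ => (1 + x ^ 2) ^ (-b)) univ := by
    have hu : (univ : Set ℝ) = Iio (-1) ∪ Icc (-1) 1 ∪ Ioi 1 := by
      ext x
      simp only [mem_univ, mem_union, mem_Iio, mem_Icc, mem_Ioi, true_iff]
      by_cases h1 : x < -1
      · tauto
      · by_cases h2 : x ≤ 1
        · left; right; constructor <;> linarith
        · right; linarith
    rw [hu]
    exact (hIio.union hIcc).union hIoi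
  rwa [integrableOn_univ] at this

lemma meas_f2 (b : ℝ) : Measurable (fun p : ℝ × ℝ => p.2 ^ (b-1) * rexp (-((1+p.1^2) * p.2))) := by
  measurability

lemma meas_f1 (b u : ℝ) : Measurable (fun t : ℝ => t ^ (b-1) * rexp (-((1+u^2) * t))) :=
  (meas_f2 b).comp (measurable_const.prodMk measurable_id)

lemma step_A {b : ℝ} (hb0 : 0 < b) (u : ℝ) :
    ∫ t in Ioi (0:ℝ), t ^ (b - 1) * rexp (-((1 + u ^ 2) * t)) =
      Real.Gamma b * (1 + u ^ 2) ^ (-b) := by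
  have hr : (0:ℝ) < 1 + u ^ 2 := by positivity
  rw [Real.integral_rpow_mul_exp_neg_mul_Ioi hb0 hr]
  rw [one_div, Real.inv_rpow hr.le, ← Real.rpow_neg hr.le, mul_comm]

lemma integral_value {b : ℝ} (hb : 1 / 2 < b) :
    ∫ x : ℝ, (1 + x ^ 2) ^ (-b) = Real.sqrt π * Real.Gamma (b - 1 / 2) / Real.Gamma b := by
  have hb0 : (0:ℝ) < b := by linarith
  have hG : 0 < Real.Gamma b := Real.Gamma_pos_of_pos hb0
  -- integrability of h
  have hint : Integrable (fun x : ℝ => (1 + x ^ 2) ^ (-b)) := integrable_h hb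
  set f : ℝ → ℝ → ℝ := fun u t => t ^ (b - 1) * rexp (-((1 + u ^ 2) * t)) with hfdef
  have hfnonneg : ∀ u : ℝ, ∀ t ∈ Ioi (0:ℝ), 0 ≤ f u t := by
    intro u t ht
    have : (0:ℝ) < t := ht
    positivity
  have hmeas : AEStronglyMeasurable (Function.uncurry f)
      (volume.prod (volume.restrict (Ioi 0))) := by
    apply Measurable.aestronglyMeasurable
    exact meas_f2 b
  -- each slice integrable
  have hslice : ∀ u : ℝ, IntegrableOn (fun t => f u t) (Ioi 0) := by
    intro u
    refine Integrable.mono (Real.GammaIntegral_convergent hb0)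
      ?_ ?_
    · exact (meas_f1 b u).aestronglyMeasurable
    · filter_upwards [ae_restrict_mem measurableSet_Ioi] with t ht
      have ht0 : (0:ℝ) < t := ht
      rw [Real.norm_eq_abs, Real.norm_eq_abs, abs_of_nonneg (hfnonneg u t ht),
        abs_of_nonneg (by positivity)]
      have h1 : rexp (-((1 + u ^ 2) * t)) ≤ rexp (-t) := by
        apply Real.exp_le_exp.2
        nlinarith [sq_nonneg u]
      calc f u t ≤ t ^ (b-1) * rexp (-t) := by
            exact mul_le_mul_of_nonneg_left h1 (by positivity)
        _ = rexp (-t) * t ^ (b-1) := by ring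
  -- the norm-integral function equals Γ b * h
  have hnorm : (fun u : ℝ => ∫ t in Ioi (0:ℝ), ‖f u t‖) =
      fun u : ℝ => Real.Gamma b * (1 + u ^ 2) ^ (-b) := by
    funext u
    rw [← step_A hb0 u]
    exact setIntegral_congr_fun measurableSet_Ioi fun t ht =>
      norm_of_nonneg (hfnonneg u t ht)
  have hprod : Integrable (Function.uncurry f) (volume.prod (volume.restrict (Ioi 0))) := by
    rw [MeasureTheory.integrable_prod_iff hmeas]
    constructor
    · exact ae_of_all _ fun u => hslice u
    · rw [show (fun u : ℝ => ∫ t in Ioi (0:ℝ), ‖Function.uncurry f (u, t)‖) =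
          fun u : ℝ => Real.Gamma b * (1 + u ^ 2) ^ (-b) from hnorm]
      exact hint.const_mul _
  -- Fubini
  have hswap : ∫ u : ℝ, ∫ t in Ioi (0:ℝ), f u t = ∫ t in Ioi (0:ℝ), ∫ u : ℝ, f u t :=
    MeasureTheory.integral_integral_swap hprod
  -- LHS of swap
  have hlhs : ∫ u : ℝ, ∫ t in Ioi (0:ℝ), f u t =
      Real.Gamma b * ∫ x : ℝ, (1 + x ^ 2) ^ (-b) := by
    simp_rw [hfdef, step_A hb0]
    exact integral_const_mul _ _
  -- RHS of swap
  have hrhs : ∫ t in Ioi (0:ℝ), ∫ u : ℝ, f u t =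
      Real.sqrt π * Real.Gamma (b - 1 / 2) := by
    have h1 : ∀ t ∈ Ioi (0:ℝ), (∫ u : ℝ, f u t) =
        Real.sqrt π * (t ^ (b - 1/2 - 1) * rexp (-(1 * t))) := by
      intro t ht
      have ht0 : (0:ℝ) < t := ht
      have : (fun u : ℝ => f u t) =
          fun u : ℝ => (t ^ (b-1) * rexp (-t)) * rexp (-t * u ^ 2) := by
        funext u
        rw [hfdef]
        simp only
        rw [mul_assoc, ← Real.exp_add]
        ring_nf
      rw [this, integral_const_mul, integral_gaussian]
      have hsq : Real.sqrt (π / t) = Real.sqrt π * t ^ (-(1/2) : ℝ) := by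
        rw [Real.sqrt_div pi_pos.le, Real.sqrt_eq_rpow t, div_eq_mul_inv,
          (Real.rpow_neg ht0.le _).symm]
      rw [hsq, show (1:ℝ) * t = t from one_mul t,
        show b - 1/2 - 1 = (b-1) + (-(1/2)) by ring, Real.rpow_add ht0]
      ring
    rw [setIntegral_congr_fun measurableSet_Ioi h1, integral_const_mul,
      Real.integral_rpow_mul_exp_neg_mul_Ioi (by linarith) one_pos, one_div, inv_one,
      Real.one_rpow, one_mul]
  rw [hlhs, hrhs] at hswap
  rw [eq_div_iff (ne_of_gt hG), mul_comm]
  exact hswap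

end aux

section main
open MeasureTheory Set

/-- Asymptotics of the model integral near a nondegenerate quadratic extremum:
`lim_{ε→0⁺} ε^(b-1/2) ∫_{-s}^{s} (ε + A x²)^(-b) dx = √(π/A) Γ(b-1/2)/Γ(b)`. -/
theorem stmt4 (b A s : ℝ) (hb : 1 / 2 < b) (hA : 0 < A) (hs : 0 < s) :
    Tendsto (fun ε : ℝ => ε ^ (b - 1 / 2) * ∫ x in (-s)..s, (ε + A * x ^ 2) ^ (-b))
      (𝓝[>] (0:ℝ))
      (𝓝 (Real.sqrt (π / A) * Real.Gamma (b - 1 / 2) / Real.Gamma b)) := by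
  have hb0 : (0:ℝ) < b := by linarith
  have hsA : 0 < Real.sqrt A := Real.sqrt_pos.2 hA
  set T : ℝ → ℝ := fun ε => s * Real.sqrt A / Real.sqrt ε with hT
  -- T tends to atTop
  have hsqrt : Tendsto Real.sqrt (𝓝[>] (0:ℝ)) (𝓝[>] (0:ℝ)) := by
    rw [tendsto_nhdsWithin_iff]
    constructor
    · exact (Real.continuous_sqrt.tendsto' 0 0 Real.sqrt_zero).mono_left nhdsWithin_le_nhds
    · filter_upwards [self_mem_nhdsWithin] with x hx using Real.sqrt_pos.2 hx
  have hTtop : Tendsto T (𝓝[>] (0:ℝ)) atTop := by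
    have h1 : Tendsto (fun ε : ℝ => (Real.sqrt ε)⁻¹) (𝓝[>] (0:ℝ)) atTop :=
      tendsto_inv_nhdsGT_zero.comp hsqrt
    have h2 := h1.const_mul_atTop (mul_pos hs hsA)
    simpa [hT, div_eq_mul_inv] using h2
  have hneg : Tendsto (fun ε : ℝ => -(T ε)) (𝓝[>] (0:ℝ)) atBot :=
    tendsto_neg_atTop_atBot.comp hTtop
  have hmain : Tendsto (fun ε : ℝ => (Real.sqrt A)⁻¹ * ∫ u in (-(T ε))..(T ε), (1 + u ^ 2) ^ (-b))
      (𝓝[>] (0:ℝ))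
      (𝓝 ((Real.sqrt A)⁻¹ * ∫ u : ℝ, (1 + u ^ 2) ^ (-b))) :=
    (MeasureTheory.intervalIntegral_tendsto_integral (integrable_h hb) hneg hTtop).const_mul _
  have hval : (Real.sqrt A)⁻¹ * ∫ u : ℝ, (1 + u ^ 2) ^ (-b)
      = Real.sqrt (π / A) * Real.Gamma (b - 1 / 2) / Real.Gamma b := by
    rw [integral_value hb, Real.sqrt_div pi_pos.le]
    field_simp
  rw [hval] at hmain
  refine hmain.congr' ?_ |>.mono_left le_rfl
  -- eventually equal on 𝓝[>]0
  filter_upwards [self_mem_nhdsWithin] with ε hε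
  have hε0 : (0:ℝ) < ε := hε
  have hsε : 0 < Real.sqrt ε := Real.sqrt_pos.2 hε0
  set c : ℝ := Real.sqrt ε / Real.sqrt A with hc
  have hc0 : 0 < c := div_pos hsε hsA
  have hc2 : c ^ 2 = ε / A := by
    rw [hc, div_pow, Real.sq_sqrt hε0.le, Real.sq_sqrt hA.le]
  have hpt : ∀ x : ℝ, (ε + A * x ^ 2) ^ (-b) = ε ^ (-b) * (1 + (x / c) ^ 2) ^ (-b) := by
    intro x
    have h1 : ε + A * x ^ 2 = ε * (1 + (x / c) ^ 2) := by
      rw [div_pow, hc2]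
      field_simp
    rw [h1, Real.mul_rpow hε0.le (by positivity)]
  have hI : (∫ x in (-s)..s, (ε + A * x ^ 2) ^ (-b))
      = ε ^ (-b) * (c * ∫ u in (-(T ε))..(T ε), (1 + u ^ 2) ^ (-b)) := by
    simp_rw [hpt]
    rw [intervalIntegral.integral_const_mul,
      intervalIntegral.integral_comp_div (fun u => (1 + u ^ 2) ^ (-b)) (ne_of_gt hc0)]
    have hTs : s / c = T ε := by
      rw [hT, hc]
      field_simp
    rw [smul_eq_mul, neg_div, hTs]
  rw [hI]
  have hsc : ε ^ (b - 1/2) * ε ^ (-b) * c = (Real.sqrt A)⁻¹ := by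
    have h2 : ε ^ (b - 1/2) * ε ^ (-b) * Real.sqrt ε = 1 := by
      rw [Real.sqrt_eq_rpow ε, ← Real.rpow_add hε0, ← Real.rpow_add hε0,
        show b - 1/2 + -b + 1/2 = 0 by ring, Real.rpow_zero]
    rw [hc, ← mul_div_assoc, h2, one_div]
  calc (Real.sqrt A)⁻¹ * ∫ u in (-(T ε))..(T ε), (1 + u ^ 2) ^ (-b)
      = (ε ^ (b - 1/2) * ε ^ (-b) * c) * ∫ u in (-(T ε))..(T ε), (1 + u ^ 2) ^ (-b) := by rw [hsc]
    _ = ε ^ (b - 1/2) * (ε ^ (-b) * (c * ∫ u in (-(T ε))..(T ε), (1 + u ^ 2) ^ (-b))) := by ring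

end main
end

section
/- Let λ ∈ [−1, 0), and let f : [0,1] → ℝ be continuous and non-constant with ∫₀¹ f(α) dα = 0; set m₀ = min f < 0 and M₀ = max f > 0. Then for every η with 0 ≤ η ≤ 1/(λ·m₀): 1 ≤ ∫₀¹ (1 − λ·η·f(α))^(−1/λ) dα ≤ (1 − M₀/m₀)^(−1/λ). -/
/-- Estimate (quick3): for `λ ∈ [-1,0)` and continuous non-constant mean-zero `f`,
`1 ≤ ∫₀¹ (1 - λ η f(α))^(-1/λ) dα ≤ (1 - M₀/m₀)^(-1/λ)` for `0 ≤ η ≤ 1/(λ m₀)`. -/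
theorem stmt8 (lam : ℝ) (hlam : lam ∈ Set.Ico (-1 : ℝ) 0)
    (f : ℝ → ℝ) (hf : ContinuousOn f (Set.Icc 0 1))
    (hnc : ∃ x ∈ Set.Icc (0:ℝ) 1, ∃ y ∈ Set.Icc (0:ℝ) 1, f x ≠ f y)
    (hmean : (∫ α in (0:ℝ)..1, f α) = 0)
    (m₀ M₀ : ℝ) (hm₀ : IsLeast (f '' Set.Icc 0 1) m₀)
    (hM₀ : IsGreatest (f '' Set.Icc 0 1) M₀)
    (hm₀neg : m₀ < 0) (hM₀pos : 0 < M₀) :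
    ∀ η : ℝ, 0 ≤ η → η ≤ 1 / (lam * m₀) →
      1 ≤ (∫ α in (0:ℝ)..1, (1 - lam * η * f α) ^ (-1 / lam)) ∧
      (∫ α in (0:ℝ)..1, (1 - lam * η * f α) ^ (-1 / lam)) ≤
        (1 - M₀ / m₀) ^ (-1 / lam) := by
  obtain ⟨hlam1, hlam0⟩ := hlam
  intro η hη0 hη1
  set p : ℝ := -1 / lam with hp
  have hp1 : 1 ≤ p := by
    rw [hp, le_div_iff_of_neg hlam0]; linarith
  have hp0 : 0 < p := lt_of_lt_of_le one_pos hp1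
  have hposlm : 0 < lam * m₀ := mul_pos_of_neg_of_neg hlam0 hm₀neg
  have hkey : η * (lam * m₀) ≤ 1 := (le_div_iff₀ hposlm).mp hη1
  have hln : lam * η ≤ 0 := mul_nonpos_of_nonpos_of_nonneg hlam0.le hη0
  have hfm : ∀ α ∈ Set.Icc (0:ℝ) 1, m₀ ≤ f α := fun α hα => hm₀.2 ⟨α, hα, rfl⟩
  have hfM : ∀ α ∈ Set.Icc (0:ℝ) 1, f α ≤ M₀ := fun α hα => hM₀.2 ⟨α, hα, rfl⟩
  have hJlo : ∀ α ∈ Set.Icc (0:ℝ) 1, 0 ≤ 1 - lam * η * f α := by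
    intro α hα
    nlinarith [mul_le_mul_of_nonpos_left (hfm α hα) hln, hkey]
  have hJhi : ∀ α ∈ Set.Icc (0:ℝ) 1, 1 - lam * η * f α ≤ 1 - M₀ / m₀ := by
    intro α hα
    have hdiv : M₀ / m₀ ≤ lam * η * M₀ := by
      rw [div_le_iff_of_neg hm₀neg]
      nlinarith [mul_le_mul_of_nonneg_right hkey hM₀pos.le]
    nlinarith [mul_le_mul_of_nonpos_left (hfM α hα) hln]
  -- integrability
  have hJcont : ContinuousOn (fun α => 1 - lam * η * f α) (Set.Icc 0 1) :=
    (continuousOn_const.sub (continuousOn_const.mul hf))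
  have hgcont : ContinuousOn (fun α => (1 - lam * η * f α) ^ p) (Set.Icc (0:ℝ) 1) :=
    hJcont.rpow_const (fun x _ => Or.inr hp0.le)
  have hgint : IntervalIntegrable (fun α => (1 - lam * η * f α) ^ p) MeasureTheory.volume 0 1 := by
    apply ContinuousOn.intervalIntegrable
    rwa [Set.uIcc_of_le (zero_le_one)]
  have hfint : IntervalIntegrable f MeasureTheory.volume 0 1 := by
    apply ContinuousOn.intervalIntegrable
    rwa [Set.uIcc_of_le (zero_le_one)]
  have hlinint : IntervalIntegrable (fun α => 1 + (p * -(lam * η)) * f α)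
      MeasureTheory.volume 0 1 :=
    intervalIntegrable_const.add (hfint.const_mul _)
  -- lower bound
  have hlow : (1:ℝ) ≤ ∫ α in (0:ℝ)..1, (1 - lam * η * f α) ^ p := by
    have h1 : (∫ α in (0:ℝ)..1, (1 + (p * -(lam * η)) * f α)) = 1 := by
      rw [intervalIntegral.integral_add intervalIntegrable_const (hfint.const_mul _),
        intervalIntegral.integral_const_mul, hmean]
      simp
    have hle := intervalIntegral.integral_mono_on (a := (0:ℝ)) (b := 1) zero_le_one hlinint hgint ?_
    · linarith [h1 ▸ hle]
    intro α hα
    have hs : -1 ≤ -(lam * η) * f α := by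
      have := hJlo α hα; nlinarith
    have := one_add_mul_self_le_rpow_one_add hs hp1
    calc 1 + (p * -(lam * η)) * f α = 1 + p * (-(lam * η) * f α) := by ring
      _ ≤ (1 + -(lam * η) * f α) ^ p := this
      _ = (1 - lam * η * f α) ^ p := by ring_nf
  -- upper bound
  have hhigh : (∫ α in (0:ℝ)..1, (1 - lam * η * f α) ^ p) ≤ (1 - M₀ / m₀) ^ p := by
    have hconst : (∫ _α in (0:ℝ)..1, (1 - M₀ / m₀) ^ p) = (1 - M₀ / m₀) ^ p := by
      simp
    rw [← hconst]
    apply intervalIntegral.integral_mono_on zero_le_one hgint intervalIntegrable_const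
    intro α hα
    exact Real.rpow_le_rpow (hJlo α hα) (hJhi α hα) hp0.le
  exact ⟨hlow, hhigh⟩
end

section
/- Let λ < −1, and let f : [0,1] → ℝ be continuous and non-constant with ∫₀¹ f(α) dα = 0; set m₀ = min f < 0. Then for every η with 0 ≤ η ≤ 1/(λ·m₀): 0 < ∫₀¹ (1 − f(α)/m₀)^(−1/λ) dα ≤ ∫₀¹ (1 − λ·η·f(α))^(−1/λ) dα ≤ 1. -/
open Real intervalIntegral MeasureTheory Set

/-- Bernoulli: for `0 ≤ x`, `0 ≤ p ≤ 1`, `x ^ p ≤ 1 + p * (x - 1)`. -/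
lemma bern {x p : ℝ} (hx : 0 ≤ x) (hp0 : 0 ≤ p) (hp1 : p ≤ 1) :
    x ^ p ≤ 1 + p * (x - 1) := by
  have := rpow_one_add_le_one_add_mul_self (s := x - 1) (by linarith) hp0 hp1
  simpa using this

/-- Tangent line estimate for the concave function `x ↦ x ^ p`. -/
lemma tangent {x y p : ℝ} (hx : 0 ≤ x) (hy : 0 < y) (hp0 : 0 ≤ p) (hp1 : p ≤ 1) :
    x ^ p ≤ y ^ p + p * y ^ (p - 1) * (x - y) := by
  have hxy : 0 ≤ x / y := div_nonneg hx hy.le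
  have h1 : (x / y) ^ p ≤ 1 + p * (x / y - 1) := bern hxy hp0 hp1
  have hyp : (0:ℝ) < y ^ p := Real.rpow_pos_of_pos hy p
  have h2 : x ^ p = y ^ p * (x / y) ^ p := by
    rw [← Real.mul_rpow hy.le hxy, mul_div_cancel₀ _ hy.ne']
  have h3 : y ^ (p - 1) = y ^ p / y := Real.rpow_sub_one hy.ne' p
  have h4 : y ^ p * (x / y - 1) = y ^ (p - 1) * (x - y) := by
    rw [h3]; field_simp
  calc x ^ p = y ^ p * (x / y) ^ p := h2
    _ ≤ y ^ p * (1 + p * (x / y - 1)) := mul_le_mul_of_nonneg_left h1 hyp.le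
    _ = y ^ p + p * (y ^ p * (x / y - 1)) := by ring
    _ = y ^ p + p * y ^ (p - 1) * (x - y) := by rw [h4]; ring

/-- Estimate (newest): for `λ < -1` and continuous non-constant mean-zero `f`,
`0 < ∫₀¹ (1 - f/m₀)^(-1/λ) dα ≤ ∫₀¹ (1 - λ η f(α))^(-1/λ) dα ≤ 1`
for `0 ≤ η ≤ 1/(λ m₀)`. -/
theorem stmt9 (lam : ℝ) (hlam : lam < -1)
    (f : ℝ → ℝ) (hf : ContinuousOn f (Set.Icc 0 1))
    (hnc : ∃ x ∈ Set.Icc (0:ℝ) 1, ∃ y ∈ Set.Icc (0:ℝ) 1, f x ≠ f y)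
    (hmean : (∫ α in (0:ℝ)..1, f α) = 0)
    (m₀ : ℝ) (hm₀ : IsLeast (f '' Set.Icc 0 1) m₀) (hm₀neg : m₀ < 0) :
    ∀ η : ℝ, 0 ≤ η → η ≤ 1 / (lam * m₀) →
      0 < (∫ α in (0:ℝ)..1, (1 - f α / m₀) ^ (-1 / lam)) ∧
      (∫ α in (0:ℝ)..1, (1 - f α / m₀) ^ (-1 / lam)) ≤
        (∫ α in (0:ℝ)..1, (1 - lam * η * f α) ^ (-1 / lam)) ∧
      (∫ α in (0:ℝ)..1, (1 - lam * η * f α) ^ (-1 / lam)) ≤ 1 := by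
  intro η hη0 hη1
  have hlam0 : lam < 0 := by linarith
  have hlamne : lam ≠ 0 := ne_of_lt hlam0
  have hm₀ne : m₀ ≠ 0 := ne_of_lt hm₀neg
  set p : ℝ := -1 / lam with hp
  have hpeq : p = 1 / (-lam) := by rw [hp, div_neg, neg_div]
  have hlamneg : (0:ℝ) < -lam := by linarith
  have hp0 : 0 < p := by rw [hpeq]; positivity
  have hp1 : p < 1 := by rw [hpeq, div_lt_one hlamneg]; linarith
  -- lower bound of f
  have hlb : ∀ α ∈ Set.Icc (0:ℝ) 1, m₀ ≤ f α := fun α hα => hm₀.2 ⟨α, hα, rfl⟩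
  -- scalar bounds
  have hc0 : lam * η ≤ 0 := mul_nonpos_of_nonpos_of_nonneg hlam0.le hη0
  have hc1 : 1 / m₀ ≤ lam * η := by
    have h1 : lam * (1 / (lam * m₀)) ≤ lam * η :=
      mul_le_mul_of_nonpos_left hη1 hlam0.le
    have h2 : lam * (1 / (lam * m₀)) = 1 / m₀ := by field_simp
    linarith
  have hm₀inv : 1 / m₀ ≤ 0 := le_of_lt (div_neg_of_pos_of_neg one_pos hm₀neg)
  have hle1 : ∀ α ∈ Set.Icc (0:ℝ) 1, (1 / m₀) * f α ≤ 1 := by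
    intro α hα
    rcases le_or_gt 0 (f α) with h | h
    · nlinarith
    · have h3 : m₀ ≤ f α := hlb α hα
      rw [one_div, inv_mul_eq_div, div_le_iff_of_neg hm₀neg]
      linarith
  have hnn : ∀ c : ℝ, c ≤ 0 → 1 / m₀ ≤ c → ∀ α ∈ Set.Icc (0:ℝ) 1,
      0 ≤ 1 - c * f α := by
    intro c hcle hcge α hα
    rcases le_or_gt 0 (f α) with h | h
    · nlinarith
    · have h2 : c * f α ≤ (1 / m₀) * f α := mul_le_mul_of_nonpos_right hcge h.le
      have h3 := hle1 α hα
      linarith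
  have hgnn : ∀ α ∈ Set.Icc (0:ℝ) 1, 0 ≤ 1 - f α / m₀ := by
    intro α hα
    have := hnn (1 / m₀) hm₀inv le_rfl α hα
    rw [one_div, inv_mul_eq_div] at this
    exact this
  have hhnn : ∀ α ∈ Set.Icc (0:ℝ) 1, 0 ≤ 1 - lam * η * f α := hnn _ hc0 hc1
  -- continuity facts
  have huIcc : Set.uIcc (0:ℝ) 1 = Set.Icc 0 1 := Set.uIcc_of_le zero_le_one
  have hfint : IntervalIntegrable f volume 0 1 := by
    apply ContinuousOn.intervalIntegrable; rwa [huIcc]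
  have hgc : ContinuousOn (fun α => 1 - f α / m₀) (Set.Icc 0 1) :=
    continuousOn_const.sub (hf.div_const m₀)
  have hhc : ContinuousOn (fun α => 1 - lam * η * f α) (Set.Icc 0 1) :=
    continuousOn_const.sub (continuousOn_const.mul hf)
  have hrpow : Continuous (fun x : ℝ => x ^ p) := Real.continuous_rpow_const hp0.le
  have hGc : ContinuousOn (fun α => (1 - f α / m₀) ^ p) (Set.Icc 0 1) :=
    hrpow.comp_continuousOn hgc
  have hHc : ContinuousOn (fun α => (1 - lam * η * f α) ^ p) (Set.Icc 0 1) :=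
    hrpow.comp_continuousOn hhc
  have hGint : IntervalIntegrable (fun α => (1 - f α / m₀) ^ p) volume 0 1 := by
    apply ContinuousOn.intervalIntegrable; rwa [huIcc]
  have hHint : IntervalIntegrable (fun α => (1 - lam * η * f α) ^ p) volume 0 1 := by
    apply ContinuousOn.intervalIntegrable; rwa [huIcc]
  refine ⟨?_, ?_, ?_⟩
  · -- positivity
    obtain ⟨x, hx, y, hy, hxy⟩ := hnc
    have hpt : ∃ z ∈ Set.Icc (0:ℝ) 1, m₀ < f z := by
      rcases eq_or_lt_of_le (hlb x hx) with h | h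
      · refine ⟨y, hy, lt_of_le_of_ne (hlb y hy) ?_⟩
        intro hyy
        exact hxy (by rw [← h]; exact hyy)
      · exact ⟨x, hx, h⟩
    obtain ⟨z, hz, hzf⟩ := hpt
    refine intervalIntegral.integral_pos zero_lt_one hGc ?_ ?_
    · intro α hα
      exact Real.rpow_nonneg (hgnn α (Set.Ioc_subset_Icc_self hα)) p
    · refine ⟨z, hz, Real.rpow_pos_of_pos ?_ p⟩
      have hdiv : f z / m₀ < 1 := by
        rw [div_lt_iff_of_neg hm₀neg]; linarith
      linarith
  · -- middle inequality
    by_cases hcase : lam * η = 1 / m₀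
    · have heq : (fun α : ℝ => (1 - lam * η * f α) ^ p) =
          fun α => (1 - f α / m₀) ^ p := by
        funext α; rw [hcase, one_div, inv_mul_eq_div]
      rw [heq]
    · have hlt : 1 / m₀ < lam * η := lt_of_le_of_ne hc1 (Ne.symm hcase)
      set d : ℝ := lam * η - 1 / m₀ with hd
      have hdpos : 0 < d := by rw [hd]; linarith
      have hhpos : ∀ α ∈ Set.Icc (0:ℝ) 1, 0 < 1 - lam * η * f α := by
        intro α hα
        rcases le_or_gt 0 (f α) with h | h
        · nlinarith
        · have h2 : lam * η * f α < (1 / m₀) * f α := mul_lt_mul_of_neg_right hlt h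
          have h3 := hle1 α hα
          linarith
      have hpw : ∀ α ∈ Set.Icc (0:ℝ) 1,
          (1 - f α / m₀) ^ p ≤ (1 - lam * η * f α) ^ p + p * d * f α := by
        intro α hα
        have hg := hgnn α hα
        have hh := hhpos α hα
        have ht := tangent hg hh hp0.le hp1.le
        have hdiff : (1 - f α / m₀) - (1 - lam * η * f α) = d * f α := by
          rw [hd]; field_simp; ring
        rw [hdiff] at ht
        have hkey : (1 - lam * η * f α) ^ (p - 1) * f α ≤ f α := by
          rcases le_or_gt 0 (f α) with h | h
          · have h1 : (1:ℝ) ≤ 1 - lam * η * f α := by nlinarith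
            have h2 : (1 - lam * η * f α) ^ (p - 1) ≤ 1 :=
              Real.rpow_le_one_of_one_le_of_nonpos h1 (by linarith)
            nlinarith
          · have h1 : 1 - lam * η * f α ≤ 1 := by nlinarith
            have h2 : (1:ℝ) ≤ (1 - lam * η * f α) ^ (p - 1) :=
              Real.one_le_rpow_of_pos_of_le_one_of_nonpos hh h1 (by linarith)
            nlinarith
        calc (1 - f α / m₀) ^ p
            ≤ (1 - lam * η * f α) ^ p
              + p * (1 - lam * η * f α) ^ (p - 1) * (d * f α) := ht
          _ = (1 - lam * η * f α) ^ p
              + (p * d) * ((1 - lam * η * f α) ^ (p - 1) * f α) := by ring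
          _ ≤ (1 - lam * η * f α) ^ p + (p * d) * f α := by
              have := mul_le_mul_of_nonneg_left hkey (mul_nonneg hp0.le hdpos.le)
              linarith
          _ = (1 - lam * η * f α) ^ p + p * d * f α := by ring
      have hmul : IntervalIntegrable (fun α => p * d * f α) volume 0 1 :=
        hfint.const_mul (p * d)
      calc (∫ α in (0:ℝ)..1, (1 - f α / m₀) ^ p)
          ≤ ∫ α in (0:ℝ)..1, ((1 - lam * η * f α) ^ p + p * d * f α) :=
            intervalIntegral.integral_mono_on zero_le_one hGint (hHint.add hmul) hpw
        _ = (∫ α in (0:ℝ)..1, (1 - lam * η * f α) ^ p)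
            + ∫ α in (0:ℝ)..1, p * d * f α :=
            intervalIntegral.integral_add hHint hmul
        _ = ∫ α in (0:ℝ)..1, (1 - lam * η * f α) ^ p := by
            rw [intervalIntegral.integral_const_mul, hmean, mul_zero, add_zero]
  · -- upper bound
    have hpw : ∀ α ∈ Set.Icc (0:ℝ) 1,
        (1 - lam * η * f α) ^ p ≤ 1 - p * lam * η * f α := by
      intro α hα
      have hb := bern (hhnn α hα) hp0.le hp1.le
      calc (1 - lam * η * f α) ^ p ≤ 1 + p * ((1 - lam * η * f α) - 1) := hb
        _ = 1 - p * lam * η * f α := by ring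
    have hmul : IntervalIntegrable (fun α => p * lam * η * f α) volume 0 1 :=
      hfint.const_mul (p * lam * η)
    calc (∫ α in (0:ℝ)..1, (1 - lam * η * f α) ^ p)
        ≤ ∫ α in (0:ℝ)..1, (1 - p * lam * η * f α) :=
          intervalIntegral.integral_mono_on zero_le_one hHint
            (intervalIntegrable_const.sub hmul) hpw
      _ = 1 := by
          rw [intervalIntegral.integral_sub intervalIntegrable_const hmul,
            intervalIntegral.integral_const_mul, hmean, mul_zero, sub_zero,
            intervalIntegral.integral_const]
          norm_num
end

section
/- Let λ ∈ [−1, 0), let f : [0,1] → ℝ be continuous and non-constant with ∫₀¹ f(α) dα = 0, set m₀ = min f < 0, M₀ = max f > 0, and η* = 1/(λ·m₀) > 0. Define t* = ∫₀^{η*} ( ∫₀¹ (1 − λ·μ·f(α))^(−1/λ) dα )^{2λ} dμ. Then η*·(1 − M₀/m₀)^(−2) ≤ t* ≤ η*. -/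
open Set intervalIntegral Real

set_option maxHeartbeats 1000000

/-- Estimate (esttime2): for `λ ∈ [-1,0)`, the blow-up time
`t* = ∫₀^{η*} K̄₀(μ)^{2λ} dμ`, `η* = 1/(λ m₀)`, satisfies
`η* (1 - M₀/m₀)⁻² ≤ t* ≤ η*`. -/
theorem stmt10 (lam : ℝ) (hlam : lam ∈ Set.Ico (-1 : ℝ) 0)
    (f : ℝ → ℝ) (hf : ContinuousOn f (Set.Icc 0 1))
    (hnc : ∃ x ∈ Set.Icc (0:ℝ) 1, ∃ y ∈ Set.Icc (0:ℝ) 1, f x ≠ f y)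
    (hmean : (∫ α in (0:ℝ)..1, f α) = 0)
    (m₀ M₀ : ℝ) (hm₀ : IsLeast (f '' Set.Icc 0 1) m₀)
    (hM₀ : IsGreatest (f '' Set.Icc 0 1) M₀)
    (hm₀neg : m₀ < 0) (hM₀pos : 0 < M₀)
    (hηstar : 0 < 1 / (lam * m₀)) :
    (1 / (lam * m₀)) * ((1 - M₀ / m₀) ^ 2)⁻¹ ≤
      (∫ μ in (0:ℝ)..(1 / (lam * m₀)),
        (∫ α in (0:ℝ)..1, (1 - lam * μ * f α) ^ (-1 / lam)) ^ (2 * lam)) ∧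
    (∫ μ in (0:ℝ)..(1 / (lam * m₀)),
        (∫ α in (0:ℝ)..1, (1 - lam * μ * f α) ^ (-1 / lam)) ^ (2 * lam)) ≤
      1 / (lam * m₀) := by
  obtain ⟨hl1, hl0⟩ := hlam
  have hlamne : lam ≠ 0 := ne_of_lt hl0
  set p : ℝ := -1 / lam with hpdef
  have hp1 : 1 ≤ p := by
    rw [hpdef, le_div_iff_of_neg hl0]
    linarith
  have hp0 : 0 < p := lt_of_lt_of_le one_pos hp1
  set η : ℝ := 1 / (lam * m₀) with hηdef
  have hlm : 0 < lam * m₀ := mul_pos_of_neg_of_neg hl0 hm₀neg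
  have hη0 : 0 < η := hηstar
  -- continuous extension of f
  obtain ⟨F, hFcont, hFeq, hFmem⟩ :
      ∃ F : ℝ → ℝ, Continuous F ∧ (∀ x ∈ Set.Icc (0:ℝ) 1, F x = f x) ∧
        ∀ x, F x ∈ f '' Set.Icc 0 1 := by
    refine ⟨Set.IccExtend zero_le_one (Set.restrict (Set.Icc 0 1) f),
      hf.restrict.Icc_extend', fun x hx => ?_, fun x => ?_⟩
    · rw [Set.IccExtend_of_mem _ _ hx]; rfl
    · exact ⟨Set.projIcc 0 1 zero_le_one x, (Set.projIcc 0 1 zero_le_one x).2, rfl⟩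
  have hFm : ∀ x, m₀ ≤ F x := fun x => hm₀.2 (hFmem x)
  have hFM : ∀ x, F x ≤ M₀ := fun x => hM₀.2 (hFmem x)
  have hFeqOn : Set.EqOn F f (Set.uIcc (0:ℝ) 1) := by
    rw [Set.uIcc_of_le (by norm_num : (0:ℝ) ≤ 1)]
    exact hFeq
  have hFmean : (∫ α in (0:ℝ)..1, F α) = 0 :=
    (intervalIntegral.integral_congr hFeqOn).trans hmean
  -- rewrite the inner integral in terms of F
  have hinner : ∀ μ : ℝ, (∫ α in (0:ℝ)..1, (1 - lam * μ * f α) ^ (-1 / lam))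
      = ∫ α in (0:ℝ)..1, (1 - lam * μ * F α) ^ p := by
    intro μ
    exact intervalIntegral.integral_congr fun x hx => by
      rw [hFeqOn hx]
  simp only [← hpdef] at hinner
  simp only [hinner]
  set K : ℝ → ℝ := fun μ => ∫ α in (0:ℝ)..1, (1 - lam * μ * F α) ^ p with hKdef
  -- continuity of K
  have hker : Continuous (Function.uncurry fun μ α => (1 - lam * μ * F α) ^ p) := by
    apply Continuous.rpow_const
    · exact (continuous_const.sub ((continuous_const.mul continuous_fst).mul
        (hFcont.comp continuous_snd)))
    · exact fun x => Or.inr hp0.le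
  have hKcont : Continuous K :=
    intervalIntegral.continuous_parametric_intervalIntegral_of_continuous' hker 0 1
  -- basic facts on [0, η]
  have hbase_nonneg : ∀ μ ∈ Set.Icc (0:ℝ) η, ∀ α : ℝ, -1 ≤ -(lam * μ * F α) := by
    intro μ hμ α
    have h1 : -(lam * μ) * F α ≥ -(lam * μ) * m₀ := by
      apply mul_le_mul_of_nonneg_left (hFm α)
      nlinarith [hμ.1]
    have h2 : -(lam * μ) * m₀ = -(μ * (lam * m₀)) := by ring
    have h3 : μ * (lam * m₀) ≤ η * (lam * m₀) :=
      mul_le_mul_of_nonneg_right hμ.2 hlm.le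
    have h4 : η * (lam * m₀) = 1 := by
      rw [hηdef]; field_simp; exact div_self (ne_of_lt hm₀neg)
    nlinarith
  -- Bernoulli: lower bound on kernel
  have hK_ge : ∀ μ ∈ Set.Icc (0:ℝ) η, 1 ≤ K μ := by
    intro μ hμ
    have hpt : ∀ α ∈ Set.Icc (0:ℝ) 1, 1 + μ * F α ≤ (1 - lam * μ * F α) ^ p := by
      intro α _
      have hb := one_add_mul_self_le_rpow_one_add (hbase_nonneg μ hμ α) hp1
      have he1 : 1 + -(lam * μ * F α) = 1 - lam * μ * F α := by ring
      have he2 : 1 + p * -(lam * μ * F α) = 1 + μ * F α := by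
        rw [hpdef]; field_simp
      rw [he1, he2] at hb
      exact hb
    have hint1 : IntervalIntegrable (fun α => 1 + μ * F α) MeasureTheory.volume 0 1 :=
      (continuous_const.add (continuous_const.mul hFcont)).intervalIntegrable 0 1
    have hint2 : IntervalIntegrable (fun α => (1 - lam * μ * F α) ^ p)
        MeasureTheory.volume 0 1 :=
      (hker.comp (Continuous.prodMk_right μ)).intervalIntegrable 0 1
    have hmono := intervalIntegral.integral_mono_on zero_le_one hint1 hint2 hpt
    have hval : (∫ α in (0:ℝ)..1, (1 + μ * F α)) = 1 := by
      rw [intervalIntegral.integral_add (f := fun _ => (1:ℝ)) (g := fun α => μ * F α)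
        (intervalIntegrable_const)
        ((continuous_const.mul hFcont).intervalIntegrable 0 1),
        intervalIntegral.integral_const_mul, hFmean]
      simp
    rw [hval] at hmono
    exact hmono
  -- upper bound on kernel
  set C : ℝ := 1 - M₀ / m₀ with hCdef
  have hC1 : 1 < C := by
    rw [hCdef]
    have : M₀ / m₀ < 0 := div_neg_of_pos_of_neg hM₀pos hm₀neg
    linarith
  have hC0 : 0 < C := lt_trans one_pos hC1
  have hK_le : ∀ μ ∈ Set.Icc (0:ℝ) η, K μ ≤ C ^ p := by
    intro μ hμ
    have hpt : ∀ α ∈ Set.Icc (0:ℝ) 1, (1 - lam * μ * F α) ^ p ≤ C ^ p := by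
      intro α _
      apply Real.rpow_le_rpow (by nlinarith [hbase_nonneg μ hμ α]) _ hp0.le
      -- 1 - lam μ F α ≤ 1 - lam μ M₀ ≤ 1 - M₀/m₀ = C
      have h1 : lam * μ * M₀ ≤ lam * μ * F α := by
        have : lam * μ ≤ 0 := by nlinarith [hμ.1]
        exact mul_le_mul_of_nonpos_left (hFM α) this
      have h2 : lam * η * M₀ ≤ lam * μ * M₀ := by
        have hlM : lam * M₀ < 0 := mul_neg_of_neg_of_pos hl0 hM₀pos
        nlinarith [hμ.2]
      have hm₀ne : m₀ ≠ 0 := ne_of_lt hm₀neg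
      have h3 : lam * η * M₀ = M₀ / m₀ := by
        rw [hηdef]; field_simp
      rw [hCdef]
      linarith
    have hint2 : IntervalIntegrable (fun α => (1 - lam * μ * F α) ^ p)
        MeasureTheory.volume 0 1 :=
      (hker.comp (Continuous.prodMk_right μ)).intervalIntegrable 0 1
    have hmono := intervalIntegral.integral_mono_on zero_le_one hint2
      intervalIntegrable_const hpt
    simpa using hmono
  -- the outer integrand
  set g : ℝ → ℝ := fun μ => (K μ) ^ (2 * lam) with hgdef
  have hgcont : ContinuousOn g (Set.uIcc 0 η) := by
    rw [Set.uIcc_of_le hη0.le]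
    intro μ hμ
    exact (hKcont.continuousWithinAt).rpow_const
      (Or.inl (ne_of_gt (lt_of_lt_of_le one_pos (hK_ge μ hμ))))
  have hgint : IntervalIntegrable g MeasureTheory.volume 0 η :=
    hgcont.intervalIntegrable
  have h2lam : 2 * lam ≤ 0 := by linarith
  constructor
  · -- lower bound
    have hpt : ∀ μ ∈ Set.Icc (0:ℝ) η, ((C:ℝ) ^ 2)⁻¹ ≤ g μ := by
      intro μ hμ
      have hK0 : 0 < K μ := lt_of_lt_of_le one_pos (hK_ge μ hμ)
      have := Real.rpow_le_rpow_of_nonpos hK0 (hK_le μ hμ) h2lam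
      have hplam : p * (2 * lam) = -((2:ℕ):ℝ) := by
        rw [hpdef]; push_cast; field_simp
      have heq : (C ^ p) ^ (2 * lam) = (C ^ 2)⁻¹ := by
        calc (C ^ p) ^ (2 * lam) = C ^ (p * (2 * lam)) :=
              (Real.rpow_mul hC0.le _ _).symm
          _ = C ^ (-((2:ℕ):ℝ)) := by rw [hplam]
          _ = (C ^ ((2:ℕ):ℝ))⁻¹ := Real.rpow_neg hC0.le _
          _ = (C ^ 2)⁻¹ := by rw [Real.rpow_natCast]
      rw [heq] at this
      exact this
    have hmono := intervalIntegral.integral_mono_on hη0.le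
      intervalIntegrable_const hgint hpt
    rw [intervalIntegral.integral_const] at hmono
    simpa [smul_eq_mul] using hmono
  · -- upper bound
    have hpt : ∀ μ ∈ Set.Icc (0:ℝ) η, g μ ≤ 1 := fun μ hμ =>
      Real.rpow_le_one_of_one_le_of_nonpos (hK_ge μ hμ) h2lam
    have hmono := intervalIntegral.integral_mono_on hη0.le hgint
      intervalIntegrable_const hpt
    rw [intervalIntegral.integral_const] at hmono
    simpa [smul_eq_mul] using hmono
end

section
/- Let λ < −1, let f : [0,1] → ℝ be continuous and non-constant with ∫₀¹ f(α) dα = 0, set m₀ = min f < 0 and η* = 1/(λ·m₀) > 0. Define t* = ∫₀^{η*} ( ∫₀¹ (1 − λ·μ·f(α))^(−1/λ) dα )^{2λ} dμ. Then η* ≤ t* ≤ η* · ( ∫₀¹ (1 − f(α)/m₀)^(−1/λ) dα )^{2λ}; in particular t* is finite. -/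
open MeasureTheory Set

set_option maxHeartbeats 1000000 in
/-- Estimate (lowt) plus finiteness: for `λ < -1`, the blow-up time
`t* = ∫₀^{η*} K̄₀(μ)^{2λ} dμ`, `η* = 1/(λ m₀)`, satisfies
`η* ≤ t* ≤ η* (∫₀¹ (1 - f/m₀)^(-1/λ) dα)^{2λ}`; in particular `t*` is finite
(the integrand is interval integrable). -/
theorem stmt11 (lam : ℝ) (hlam : lam < -1)
    (f : ℝ → ℝ) (hf : ContinuousOn f (Set.Icc 0 1))
    (hnc : ∃ x ∈ Set.Icc (0:ℝ) 1, ∃ y ∈ Set.Icc (0:ℝ) 1, f x ≠ f y)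
    (hmean : (∫ α in (0:ℝ)..1, f α) = 0)
    (m₀ : ℝ) (hm₀ : IsLeast (f '' Set.Icc 0 1) m₀) (hm₀neg : m₀ < 0)
    (hηstar : 0 < 1 / (lam * m₀)) :
    IntervalIntegrable
      (fun μ => (∫ α in (0:ℝ)..1, (1 - lam * μ * f α) ^ (-1 / lam)) ^ (2 * lam))
      MeasureTheory.volume 0 (1 / (lam * m₀)) ∧
    1 / (lam * m₀) ≤
      (∫ μ in (0:ℝ)..(1 / (lam * m₀)),
        (∫ α in (0:ℝ)..1, (1 - lam * μ * f α) ^ (-1 / lam)) ^ (2 * lam)) ∧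
    (∫ μ in (0:ℝ)..(1 / (lam * m₀)),
        (∫ α in (0:ℝ)..1, (1 - lam * μ * f α) ^ (-1 / lam)) ^ (2 * lam)) ≤
      (1 / (lam * m₀)) *
        (∫ α in (0:ℝ)..1, (1 - f α / m₀) ^ (-1 / lam)) ^ (2 * lam) := by
  have hlam0 : lam < 0 := by linarith
  have hlamne : lam ≠ 0 := ne_of_lt hlam0
  have hm₀ne : m₀ ≠ 0 := ne_of_lt hm₀neg
  set p : ℝ := -1 / lam with hp
  have hp0 : 0 < p := by
    rw [hp, div_pos_iff]; right; constructor <;> linarith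
  have hp1 : p < 1 := by
    rw [hp, div_lt_one_iff]; right; right; exact ⟨hlam0, hlam⟩
  set η : ℝ := 1 / (lam * m₀) with hη
  have hη0 : 0 < η := hηstar
  have hlm : 0 < lam * m₀ := mul_pos_of_neg_of_neg hlam0 hm₀neg
  have hlamη : lam * η = 1 / m₀ := by rw [hη]; field_simp
  -- continuous extension of f
  set F : ℝ → ℝ := fun α => f (Set.projIcc (0:ℝ) 1 zero_le_one α) with hFdef
  have hFcont : Continuous F :=
    (continuousOn_iff_continuous_restrict.mp hf).comp continuous_projIcc
  have hFeq : ∀ α ∈ Icc (0:ℝ) 1, F α = f α := by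
    intro α hα
    rw [hFdef]; simp [Set.projIcc_of_mem zero_le_one hα]
  have hFlb : ∀ α : ℝ, m₀ ≤ F α := fun α =>
    hm₀.2 ⟨_, (Set.projIcc (0:ℝ) 1 zero_le_one α).2, rfl⟩
  obtain ⟨z, hz, hzmax⟩ := isCompact_Icc.exists_isMaxOn ⟨0, left_mem_Icc.2 zero_le_one⟩ hf
  have hFub : ∀ α : ℝ, F α ≤ f z := fun α =>
    hzmax (Set.projIcc (0:ℝ) 1 zero_le_one α).2
  have hFint : IntervalIntegrable F volume 0 1 := hFcont.intervalIntegrable _ _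
  have hFmean : (∫ α in (0:ℝ)..1, F α) = 0 := by
    have heq : Set.EqOn F f (uIcc (0:ℝ) 1) := by
      rw [uIcc_of_le zero_le_one]; exact hFeq
    rw [intervalIntegral.integral_congr heq, hmean]
  -- K
  set K : ℝ → ℝ := fun μ => ∫ α in (0:ℝ)..1, (1 - lam * μ * F α) ^ p with hK
  -- base nonneg
  have hbase : ∀ μ ∈ Icc (0:ℝ) η, ∀ α : ℝ, 0 ≤ 1 - lam * μ * F α := by
    intro μ hμ α
    have h1 : lam * μ * F α ≤ lam * μ * m₀ :=
      mul_le_mul_of_nonpos_left (hFlb α) (mul_nonpos_of_nonpos_of_nonneg hlam0.le hμ.1)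
    have hη1 : lam * m₀ * η = 1 := by rw [hη]; field_simp
    nlinarith [mul_le_mul_of_nonneg_left hμ.2 hlm.le]
  -- continuity of inner integrand & K
  have hinnercont : ∀ μ : ℝ, Continuous fun α => (1 - lam * μ * F α) ^ p := fun μ =>
    (continuous_const.sub (continuous_const.mul hFcont)).rpow_const fun α => Or.inr hp0.le
  have hinnerint : ∀ μ : ℝ, IntervalIntegrable (fun α => (1 - lam * μ * F α) ^ p)
      volume 0 1 := fun μ => (hinnercont μ).intervalIntegrable _ _
  have hKcont : Continuous K := by
    rw [hK]
    exact intervalIntegral.continuous_parametric_intervalIntegral_of_continuous'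
      (f := fun (μ : ℝ) (α : ℝ) => (1 - lam * μ * F α) ^ p)
      ((Continuous.rpow_const (f := fun x : ℝ × ℝ => 1 - lam * x.1 * F x.2) (continuous_const.sub ((continuous_const.mul continuous_fst).mul
        (hFcont.comp continuous_snd)))) fun q => Or.inr hp0.le) 0 1
  -- integral of affine expression
  have haffine : ∀ μ : ℝ, (∫ α in (0:ℝ)..1, (1 - lam * μ * F α)) = 1 := by
    intro μ
    rw [intervalIntegral.integral_sub intervalIntegrable_const
      (hFint.const_mul (lam * μ))]
    simp [intervalIntegral.integral_const_mul, hFmean]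
  -- Jensen: K μ ≤ 1 on [0, η]
  have hKle1 : ∀ μ ∈ Icc (0:ℝ) η, K μ ≤ 1 := by
    intro μ hμ
    have hpt : ∀ α ∈ Icc (0:ℝ) 1,
        (1 - lam * μ * F α) ^ p ≤ p * (1 - lam * μ * F α) + (1 - p) := by
      intro α _
      have := Real.geom_mean_le_arith_mean2_weighted hp0.le (by linarith : (0:ℝ) ≤ 1 - p)
        (hbase μ hμ α) zero_le_one (by ring)
      simpa [Real.one_rpow] using this
    have h2 : K μ ≤ ∫ α in (0:ℝ)..1, (p * (1 - lam * μ * F α) + (1 - p)) := by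
      rw [hK]
      refine intervalIntegral.integral_mono_on zero_le_one (hinnerint μ) ?_ hpt
      exact ((intervalIntegrable_const.sub (hFint.const_mul (lam * μ))).const_mul
          p).add intervalIntegrable_const
    have h3 : (∫ α in (0:ℝ)..1, (p * (1 - lam * μ * F α) + (1 - p))) = 1 := by
      rw [intervalIntegral.integral_add ((intervalIntegrable_const.sub
        (hFint.const_mul (lam * μ))).const_mul p) intervalIntegrable_const,
        intervalIntegral.integral_const_mul, haffine μ]
      simp
    linarith
  -- concavity: K η ≤ K μ on [0, η]
  have hKmono : ∀ μ ∈ Icc (0:ℝ) η, K η ≤ K μ := by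
    intro μ hμ
    set s : ℝ := μ / η with hs
    have hs0 : 0 ≤ s := div_nonneg hμ.1 hη0.le
    have hs1 : s ≤ 1 := (div_le_one hη0).2 hμ.2
    have hηmem : η ∈ Icc (0:ℝ) η := right_mem_Icc.2 hη0.le
    have hsη : s * η = μ := by rw [hs]; field_simp
    have hpt : ∀ α ∈ Icc (0:ℝ) 1,
        (1 - s) * 1 + s * (1 - lam * η * F α) ^ p ≤ (1 - lam * μ * F α) ^ p := by
      intro α _
      have hcomb := (Real.concaveOn_rpow hp0.le hp1.le).2
        (mem_Ici.2 zero_le_one) (mem_Ici.2 (hbase η hηmem α))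
        (by linarith : (0:ℝ) ≤ 1 - s) hs0 (by ring)
      have hlin : (1 - s) • (1:ℝ) + s • (1 - lam * η * F α) = 1 - lam * μ * F α := by
        simp only [smul_eq_mul]; rw [← hsη]; ring
      rw [hlin] at hcomb
      simpa [Real.one_rpow, smul_eq_mul] using hcomb
    have h2 : (∫ α in (0:ℝ)..1, ((1 - s) * 1 + s * (1 - lam * η * F α) ^ p)) ≤ K μ := by
      rw [hK]
      refine intervalIntegral.integral_mono_on zero_le_one ?_ (hinnerint μ) hpt
      exact intervalIntegrable_const.add ((hinnerint η).const_mul s)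
    have h3 : (∫ α in (0:ℝ)..1, ((1 - s) * 1 + s * (1 - lam * η * F α) ^ p))
        = (1 - s) * 1 + s * K η := by
      rw [intervalIntegral.integral_add intervalIntegrable_const
        ((hinnerint η).const_mul s), intervalIntegral.integral_const_mul]
      simp [hK]
    have h4 : K η ≤ (1 - s) * 1 + s * K η := by
      have := hKle1 η hηmem
      nlinarith
    linarith [h3 ▸ h2]
  -- positivity of K η
  have hKη0 : 0 < K η := by
    set M : ℝ := max (1 - f z / m₀) 1 with hM
    have hM1 : (1:ℝ) ≤ M := le_max_right _ _
    have hM0 : (0:ℝ) < M := by linarith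
    have hηmem : η ∈ Icc (0:ℝ) η := right_mem_Icc.2 hη0.le
    have hgM : ∀ α : ℝ, 1 - lam * η * F α ≤ M := by
      intro α
      have h1 : 0 ≤ (F α - f z) / m₀ :=
        div_nonneg_of_nonpos (by linarith [hFub α]) hm₀neg.le
      have h2 : lam * η * F α = F α / m₀ := by rw [hlamη]; ring
      have h3 : (F α - f z) / m₀ = F α / m₀ - f z / m₀ := sub_div _ _ _
      have h4 : 1 - f z / m₀ ≤ M := le_max_left _ _
      rw [h2]; linarith
    have hpt : ∀ α ∈ Icc (0:ℝ) 1,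
        M ^ (p - 1) * (1 - lam * η * F α) ≤ (1 - lam * η * F α) ^ p := by
      intro α _
      have hb := hbase η hηmem α
      rcases eq_or_lt_of_le hb with h | h
      · rw [← h]; simp [Real.zero_rpow (ne_of_gt hp0)]
      · have h1 : M ^ (p - 1) ≤ (1 - lam * η * F α) ^ (p - 1) :=
          Real.rpow_le_rpow_of_nonpos h (hgM α) (by linarith)
        have h2 : (1 - lam * η * F α) ^ (p - 1) * (1 - lam * η * F α)
            = (1 - lam * η * F α) ^ p := by
          rw [← Real.rpow_add_one (ne_of_gt h) (p - 1)]
          norm_num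
        calc M ^ (p - 1) * (1 - lam * η * F α)
            ≤ (1 - lam * η * F α) ^ (p - 1) * (1 - lam * η * F α) :=
              mul_le_mul_of_nonneg_right h1 hb
          _ = _ := h2
    have hint2 : IntervalIntegrable (fun α => M ^ (p - 1) * (1 - lam * η * F α))
        volume 0 1 :=
      (intervalIntegrable_const.sub (hFint.const_mul _)).const_mul _
    have h5 : M ^ (p - 1) * 1 ≤ K η := by
      have h6 := intervalIntegral.integral_mono_on zero_le_one hint2 (hinnerint η) hpt
      rw [intervalIntegral.integral_const_mul, haffine η] at h6
      exact h6
    have h7 : 0 < M ^ (p - 1) := Real.rpow_pos_of_pos hM0 _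
    linarith
  -- final assembly
  have h2lam : (2 * lam) ≤ 0 := by linarith
  have hKpos : ∀ μ ∈ Icc (0:ℝ) η, 0 < K μ := fun μ hμ =>
    lt_of_lt_of_le hKη0 (hKmono μ hμ)
  have hGcont : ContinuousOn (fun μ => K μ ^ (2 * lam)) (uIcc 0 η) := by
    rw [uIcc_of_le hη0.le]
    exact hKcont.continuousOn.rpow_const fun μ hμ => Or.inl (hKpos μ hμ).ne'
  have hGint : IntervalIntegrable (fun μ => K μ ^ (2 * lam)) volume 0 η :=
    hGcont.intervalIntegrable
  have hKf : ∀ μ : ℝ, (∫ α in (0:ℝ)..1, (1 - lam * μ * f α) ^ p) = K μ := by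
    intro μ
    have heq : Set.EqOn (fun α => (1 - lam * μ * F α) ^ p)
        (fun α => (1 - lam * μ * f α) ^ p) (uIcc (0:ℝ) 1) := by
      intro α hα
      rw [uIcc_of_le zero_le_one] at hα
      simp only [hFeq α hα]
    rw [hK]
    exact (intervalIntegral.integral_congr heq).symm
  have hKη' : (∫ α in (0:ℝ)..1, (1 - f α / m₀) ^ p) = K η := by
    have heq : Set.EqOn (fun α => (1 - lam * η * F α) ^ p)
        (fun α => (1 - f α / m₀) ^ p) (uIcc (0:ℝ) 1) := by
      intro α hα
      rw [uIcc_of_le zero_le_one] at hα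
      have : lam * η * F α = f α / m₀ := by rw [hFeq α hα, hlamη]; ring
      simp only [this]
    rw [hK]
    exact (intervalIntegral.integral_congr heq).symm
  simp only [hKf, hKη']
  refine ⟨hGint, ?_, ?_⟩
  · have hpt : ∀ μ ∈ Icc (0:ℝ) η, (1:ℝ) ≤ K μ ^ (2 * lam) := by
      intro μ hμ
      have h1 := Real.rpow_le_rpow_of_nonpos (hKpos μ hμ) (hKle1 μ hμ) h2lam
      simpa using h1
    have h2 := intervalIntegral.integral_mono_on hη0.le
      intervalIntegrable_const hGint hpt
    rw [intervalIntegral.integral_const] at h2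
    simpa using h2
  · have hpt : ∀ μ ∈ Icc (0:ℝ) η, K μ ^ (2 * lam) ≤ K η ^ (2 * lam) := fun μ hμ =>
      Real.rpow_le_rpow_of_nonpos hKη0 (hKmono μ hμ) h2lam
    have h2 := intervalIntegral.integral_mono_on hη0.le hGint
      intervalIntegrable_const hpt
    rw [intervalIntegral.integral_const] at h2
    simpa [smul_eq_mul] using h2
end

section
/- Let λ ∈ ℝ, T > 0, and let u : ℝ × [0,T) → ℝ be twice continuously differentiable, with u(x + 1, t) = u(x, t) for all x ∈ ℝ and t ∈ [0,T). Suppose u satisfies ∂ₜ∂ₓu(x,t) + u(x,t)·∂ₓ²u(x,t) − λ·(∂ₓu(x,t))² = −(λ+1)·∫₀¹ (∂ₓu(y,t))² dy for all (x,t). Then for every t ∈ [0,T), the function E(t) = ∫₀¹ (∂ₓu(x,t))² dx is differentiable and E'(t) = (1 + 2λ)·∫₀¹ (∂ₓu(x,t))³ dx. -/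
open Set intervalIntegral MeasureTheory Filter Topology

/-- Energy identity (dotderenergy): for a spatially 1-periodic `C²` solution of
`u_{xt} + u u_{xx} - λ u_x² = -(λ+1) ∫₀¹ u_x² dy`, the energy
`E(t) = ∫₀¹ u_x² dx` satisfies `E'(t) = (1+2λ) ∫₀¹ u_x³ dx` on `[0,T)`. -/
theorem stmt15 (lam T : ℝ) (hT : 0 < T) (u : ℝ → ℝ → ℝ)
    (hreg : ContDiffOn ℝ 2 (fun p : ℝ × ℝ => u p.1 p.2) (univ ×ˢ Ico 0 T))
    (hper : ∀ x t : ℝ, t ∈ Ico (0:ℝ) T → u (x + 1) t = u x t)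
    (hpde : ∀ x : ℝ, ∀ t ∈ Ico (0:ℝ) T,
      derivWithin (fun s => deriv (fun y => u y s) x) (Ico 0 T) t +
          u x t * deriv (deriv (fun y => u y t)) x -
          lam * (deriv (fun y => u y t) x) ^ 2 =
        -(lam + 1) * ∫ y in (0:ℝ)..1, (deriv (fun z => u z t) y) ^ 2) :
    ∀ t ∈ Ico (0:ℝ) T,
      HasDerivWithinAt (fun s => ∫ x in (0:ℝ)..1, (deriv (fun y => u y s) x) ^ 2)
        ((1 + 2 * lam) * ∫ x in (0:ℝ)..1, (deriv (fun y => u y t) x) ^ 3)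
        (Ico 0 T) t := by
  set S : Set (ℝ × ℝ) := univ ×ˢ Ico 0 T with hSdef
  have hS : UniqueDiffOn ℝ S := uniqueDiffOn_univ.prod (uniqueDiffOn_Ico 0 T)
  set U : ℝ × ℝ → ℝ := fun p => u p.1 p.2 with hUdef
  set f1 : ℝ × ℝ → (ℝ × ℝ →L[ℝ] ℝ) := fderivWithin ℝ U S with hf1def
  have hf1 : ContDiffOn ℝ 1 f1 S := hreg.fderivWithin hS (by norm_num)
  set g : ℝ × ℝ → ℝ := fun p => f1 p (1, 0) with hgdef
  have hg : ContDiffOn ℝ 1 g S :=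
    (ContinuousLinearMap.apply ℝ ℝ ((1:ℝ), (0:ℝ))).contDiff.comp_contDiffOn hf1
  set f2 : ℝ × ℝ → (ℝ × ℝ →L[ℝ] ℝ) := fderivWithin ℝ g S with hf2def
  have hf2 : ContinuousOn f2 S := (hg.fderivWithin (m := 0) hS (by norm_num)).continuousOn
  -- Claim 1
  have claim1 : ∀ x t : ℝ, t ∈ Ico (0:ℝ) T → HasDerivAt (fun y => u y t) (g (x, t)) x := by
    intro x t ht
    have hp : (x, t) ∈ S := ⟨mem_univ _, ht⟩
    have hU : HasFDerivWithinAt U (f1 (x, t)) S (x, t) :=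
      ((hreg.differentiableOn (by norm_num)) _ hp).hasFDerivWithinAt
    have hι : HasFDerivAt (fun y : ℝ => (y, t)) (ContinuousLinearMap.inl ℝ ℝ ℝ) x := by
      exact (hasFDerivAt_id x).prodMk (hasFDerivAt_const t x)
    have := hU.comp x (hι.hasFDerivWithinAt (s := univ)) (fun y _ => (⟨mem_univ _, ht⟩ : (y, t) ∈ S))
    have h2 : HasFDerivAt (fun y : ℝ => U (y, t)) ((f1 (x,t)).comp (ContinuousLinearMap.inl ℝ ℝ ℝ)) x := by
      exact hasFDerivWithinAt_univ.mp this
    simpa using h2.hasDerivAt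
  have hgd : DifferentiableOn ℝ g S := hg.differentiableOn (by norm_num)
  -- Claim 2 : spatial derivative of g
  have claim2 : ∀ x t : ℝ, t ∈ Ico (0:ℝ) T →
      HasDerivAt (fun y => g (y, t)) (f2 (x, t) (1, 0)) x := by
    intro x t ht
    have hp : (x, t) ∈ S := ⟨mem_univ _, ht⟩
    have hU : HasFDerivWithinAt g (f2 (x, t)) S (x, t) := (hgd _ hp).hasFDerivWithinAt
    have hι : HasFDerivAt (fun y : ℝ => (y, t)) (ContinuousLinearMap.inl ℝ ℝ ℝ) x :=
      (hasFDerivAt_id x).prodMk (hasFDerivAt_const t x)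
    have := hU.comp x (hι.hasFDerivWithinAt (s := univ)) (fun y _ => (⟨mem_univ _, ht⟩ : (y, t) ∈ S))
    have h2 : HasFDerivAt (fun y : ℝ => g (y, t))
        ((f2 (x,t)).comp (ContinuousLinearMap.inl ℝ ℝ ℝ)) x := by
      exact hasFDerivWithinAt_univ.mp this
    simpa using h2.hasDerivAt
  -- Claim 3 : time derivative of g within Ico 0 T
  have claim3 : ∀ x t : ℝ, t ∈ Ico (0:ℝ) T →
      HasDerivWithinAt (fun s => g (x, s)) (f2 (x, t) (0, 1)) (Ico 0 T) t := by
    intro x t ht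
    have hp : (x, t) ∈ S := ⟨mem_univ _, ht⟩
    have hU : HasFDerivWithinAt g (f2 (x, t)) S (x, t) := (hgd _ hp).hasFDerivWithinAt
    have hι : HasFDerivWithinAt (fun s : ℝ => (x, s)) (ContinuousLinearMap.inr ℝ ℝ ℝ)
        (Ico 0 T) t :=
      ((hasFDerivAt_const x t).prodMk (hasFDerivAt_id t)).hasFDerivWithinAt
    have := hU.comp t hι (fun s hs => ⟨mem_univ _, hs⟩)
    have h2 : HasDerivWithinAt (fun s : ℝ => g (x, s))
        (((f2 (x,t)).comp (ContinuousLinearMap.inr ℝ ℝ ℝ)) 1) (Ico 0 T) t :=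
      this.hasDerivWithinAt
    simpa using h2
  -- transfer claim 3 to the deriv expression in the statement
  have claim3' : ∀ x t : ℝ, t ∈ Ico (0:ℝ) T →
      HasDerivWithinAt (fun s => deriv (fun y => u y s) x) (f2 (x, t) (0, 1)) (Ico 0 T) t := by
    intro x t ht
    refine (claim3 x t ht).congr (fun s hs => ?_) ?_
    · exact (claim1 x s hs).deriv
    · exact (claim1 x t ht).deriv
  -- continuity facts
  have hvtS : ContinuousOn (fun p : ℝ × ℝ => f2 p (0, 1)) S :=
    (ContinuousLinearMap.apply ℝ ℝ ((0:ℝ), (1:ℝ))).continuous.comp_continuousOn hf2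
  have hvxS : ContinuousOn (fun p : ℝ × ℝ => f2 p (1, 0)) S :=
    (ContinuousLinearMap.apply ℝ ℝ ((1:ℝ), (0:ℝ))).continuous.comp_continuousOn hf2
  have hslice : ∀ t ∈ Ico (0:ℝ) T, ∀ h : ℝ × ℝ → ℝ, ContinuousOn h S →
      Continuous (fun x => h (x, t)) := by
    intro t ht h hh
    rw [← continuousOn_univ]
    exact hh.comp (Continuous.continuousOn (continuous_id.prodMk continuous_const))
      (fun y _ => ⟨mem_univ _, ht⟩)
  -- PDE in terms of g, f2
  have hpde' : ∀ x : ℝ, ∀ t ∈ Ico (0:ℝ) T,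
      f2 (x, t) (0, 1) = lam * (g (x, t)) ^ 2 - u x t * f2 (x, t) (1, 0) +
        (-(lam + 1)) * ∫ y in (0:ℝ)..1, (g (y, t)) ^ 2 := by
    intro x t ht
    have h0 := hpde x t ht
    have e1 : derivWithin (fun s => deriv (fun y => u y s) x) (Ico 0 T) t = f2 (x, t) (0, 1) :=
      (claim3' x t ht).derivWithin (uniqueDiffOn_Ico 0 T t ht)
    have e2 : deriv (fun y => u y t) = fun y => g (y, t) :=
      funext fun y => (claim1 y t ht).deriv
    have e3 : deriv (deriv (fun y => u y t)) x = f2 (x, t) (1, 0) := by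
      rw [e2]; exact (claim2 x t ht).deriv
    rw [e1, e2] at h0
    have e3' := (claim2 x t ht).deriv
    rw [e3'] at h0
    simp only at h0
    linarith
  -- periodicity of g in x
  have hgper : ∀ x t : ℝ, t ∈ Ico (0:ℝ) T → g (x + 1, t) = g (x, t) := by
    intro x t ht
    have hfun : (fun y => u (y + 1) t) = fun y => u y t := funext fun y => hper y t ht
    have h1 := (claim1 (x + 1) t ht).deriv
    have h2 := (claim1 x t ht).deriv
    rw [← h1, ← h2, ← deriv_comp_add_const, hfun]
  -- Step B: spatial identity
  have keyB : ∀ t ∈ Ico (0:ℝ) T,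
      (∫ x in (0:ℝ)..1, 2 * g (x, t) * f2 (x, t) (0, 1)) =
        (1 + 2 * lam) * ∫ x in (0:ℝ)..1, (g (x, t)) ^ 3 := by
    intro t ht
    have cg : Continuous fun x => g (x, t) := hslice t ht g hg.continuousOn
    have cvx : Continuous fun x => f2 (x, t) (1, 0) := hslice t ht _ hvxS
    have cvt : Continuous fun x => f2 (x, t) (0, 1) := hslice t ht _ hvtS
    have cu : Continuous fun x => u x t := by
      rw [← continuousOn_univ]
      exact (hreg.continuousOn).comp
        (Continuous.continuousOn (continuous_id.prodMk continuous_const))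
        (fun y _ => ⟨mem_univ _, ht⟩)
    -- (a) integral of g over a period vanishes
    have ia : (∫ x in (0:ℝ)..1, g (x, t)) = 0 := by
      have := intervalIntegral.integral_eq_sub_of_hasDerivAt
        (f := fun y => u y t) (f' := fun x => g (x, t))
        (fun x _ => claim1 x t ht) (cg.intervalIntegrable 0 1)
      rw [this]
      have hu1 : u 1 t = u 0 t := by simpa using hper 0 t ht
      rw [hu1, sub_self]
    -- (b) integral of (g^3 + 2*u*g*vx) vanishes
    have ib : (∫ x in (0:ℝ)..1,
        (g (x, t) ^ 3 + 2 * (u x t * (g (x, t) * f2 (x, t) (1, 0))))) = 0 := by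
      have hψ : ∀ x : ℝ, HasDerivAt (fun y => u y t * (g (y, t)) ^ 2)
          (g (x, t) ^ 3 + 2 * (u x t * (g (x, t) * f2 (x, t) (1, 0)))) x := by
        intro x
        have h1 := (claim1 x t ht).fun_mul ((claim2 x t ht).fun_pow 2)
        refine h1.congr_deriv ?_
        ring
      have cψ : Continuous fun x => g (x, t) ^ 3 +
          2 * (u x t * (g (x, t) * f2 (x, t) (1, 0))) :=
        (cg.pow 3).add (continuous_const.mul (cu.mul (cg.mul cvx)))
      have := intervalIntegral.integral_eq_sub_of_hasDerivAt (fun x _ => hψ x)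
        (cψ.intervalIntegrable 0 1)
      rw [this]
      have hu1 : u 1 t = u 0 t := by simpa using hper 0 t ht
      have hg1 : g (1, t) = g (0, t) := by simpa using hgper 0 t ht
      rw [hu1, hg1]; ring
    -- combine
    set c : ℝ := -(lam + 1) * ∫ y in (0:ℝ)..1, (g (y, t)) ^ 2 with hc
    have hcomb : ∀ x : ℝ, 2 * g (x, t) * f2 (x, t) (0, 1) =
        (1 + 2 * lam) * g (x, t) ^ 3 -
          (g (x, t) ^ 3 + 2 * (u x t * (g (x, t) * f2 (x, t) (1, 0)))) +
          (2 * c) * g (x, t) := by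
      intro x
      have := hpde' x t ht
      rw [← hc] at this
      rw [this]; ring
    calc (∫ x in (0:ℝ)..1, 2 * g (x, t) * f2 (x, t) (0, 1))
        = ∫ x in (0:ℝ)..1, ((1 + 2 * lam) * g (x, t) ^ 3 -
            (g (x, t) ^ 3 + 2 * (u x t * (g (x, t) * f2 (x, t) (1, 0)))) +
            (2 * c) * g (x, t)) := by
          exact intervalIntegral.integral_congr (fun x _ => hcomb x)
      _ = (1 + 2 * lam) * ∫ x in (0:ℝ)..1, (g (x, t)) ^ 3 := by
          rw [intervalIntegral.integral_add, intervalIntegral.integral_sub,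
            intervalIntegral.integral_const_mul, intervalIntegral.integral_const_mul,
            ia, ib]
          · ring
          · exact (continuous_const.mul (cg.pow 3)).intervalIntegrable 0 1
          · exact ((cg.pow 3).add
              (continuous_const.mul (cu.mul (cg.mul cvx)))).intervalIntegrable 0 1
          · exact (((continuous_const.mul (cg.pow 3)).sub ((cg.pow 3).add
              (continuous_const.mul (cu.mul (cg.mul cvx)))))).intervalIntegrable 0 1
          · exact (continuous_const.mul cg).intervalIntegrable 0 1
  -- Step C: integral representation of the energy
  set w : ℝ × ℝ → ℝ := fun p => 2 * g p * f2 p (0, 1) with hwdef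
  have cwS : ContinuousOn w S := (continuousOn_const.mul hg.continuousOn).mul hvtS
  set G : ℝ → ℝ := fun s => ∫ x in (0:ℝ)..1, w (x, s) with hGdef
  set F : ℝ → ℝ := fun s => ∫ x in (0:ℝ)..1, (deriv (fun y => u y s) x) ^ 2 with hFdef
  have hFg : ∀ s ∈ Ico (0:ℝ) T, F s = ∫ x in (0:ℝ)..1, (g (x, s)) ^ 2 := by
    intro s hs
    exact intervalIntegral.integral_congr fun x _ => by rw [(claim1 x s hs).deriv]
  -- C1: per-x fundamental theorem of calculus in time
  have hC1 : ∀ τ ∈ Ico (0:ℝ) T, ∀ x : ℝ,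
      (∫ s in (0:ℝ)..τ, w (x, s)) = g (x, τ) ^ 2 - g (x, 0) ^ 2 := by
    intro τ hτ x
    have hτT : τ < T := hτ.2
    have hsub : Icc (0:ℝ) τ ⊆ Ico 0 T := fun s hs => ⟨hs.1, lt_of_le_of_lt hs.2 hτT⟩
    have hslice2 : ∀ h : ℝ × ℝ → ℝ, ContinuousOn h S →
        ContinuousOn (fun s => h (x, s)) (Icc 0 τ) := by
      intro h hh
      exact hh.comp (Continuous.continuousOn (continuous_const.prodMk continuous_id))
        (fun s hs => ⟨mem_univ _, hsub hs⟩)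
    refine intervalIntegral.integral_eq_sub_of_hasDeriv_right_of_le hτ.1
      ((hslice2 g hg.continuousOn).pow 2) (fun s hs => ?_) ?_
    · have hsI : s ∈ Ico (0:ℝ) T := ⟨hs.1.le, lt_trans hs.2 hτT⟩
      have hmem : Ico (0:ℝ) T ∈ 𝓝 s :=
        Filter.mem_of_superset (Ioo_mem_nhds hs.1 (lt_trans hs.2 hτT)) Ioo_subset_Ico_self
      have := ((claim3 x s hsI).pow 2).hasDerivAt hmem
      simpa [hwdef, pow_one, mul_comm, mul_assoc, mul_left_comm] using this.hasDerivWithinAt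
    · apply ContinuousOn.intervalIntegrable
      rw [uIcc_of_le hτ.1]
      exact hslice2 w cwS
  -- C2: Fubini
  have hC2 : ∀ τ ∈ Ico (0:ℝ) T,
      (∫ x in (0:ℝ)..1, (∫ s in (0:ℝ)..τ, w (x, s))) = ∫ s in (0:ℝ)..τ, G s := by
    intro τ hτ
    have hτT : τ < T := hτ.2
    have hK : IsCompact (Icc (0:ℝ) 1 ×ˢ Icc (0:ℝ) τ) := isCompact_Icc.prod isCompact_Icc
    have hKS : (Icc (0:ℝ) 1 ×ˢ Icc (0:ℝ) τ) ⊆ S := fun p hp =>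
      ⟨mem_univ _, ⟨hp.2.1, lt_of_le_of_lt hp.2.2 hτT⟩⟩
    have hint : IntegrableOn w (Ioc (0:ℝ) 1 ×ˢ Ioc (0:ℝ) τ) volume := by
      refine IntegrableOn.mono_set ?_ (prod_mono Ioc_subset_Icc_self Ioc_subset_Icc_self)
      exact (cwS.mono hKS).integrableOn_compact hK
    have hswap : (∫ x in Ioc (0:ℝ) 1, ∫ s in Ioc (0:ℝ) τ, w (x, s)) =
        ∫ s in Ioc (0:ℝ) τ, ∫ x in Ioc (0:ℝ) 1, w (x, s) := by
      apply MeasureTheory.integral_integral_swap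
      rw [Measure.prod_restrict, ← Measure.volume_eq_prod ℝ ℝ]
      exact hint
    calc (∫ x in (0:ℝ)..1, (∫ s in (0:ℝ)..τ, w (x, s)))
        = ∫ x in Ioc (0:ℝ) 1, ∫ s in Ioc (0:ℝ) τ, w (x, s) := by
          rw [intervalIntegral.integral_of_le (by norm_num : (0:ℝ) ≤ 1)]
          exact setIntegral_congr_fun measurableSet_Ioc fun x _ => by
            rw [intervalIntegral.integral_of_le hτ.1]
      _ = ∫ s in Ioc (0:ℝ) τ, ∫ x in Ioc (0:ℝ) 1, w (x, s) := hswap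
      _ = ∫ s in (0:ℝ)..τ, G s := by
          rw [intervalIntegral.integral_of_le hτ.1]
          exact setIntegral_congr_fun measurableSet_Ioc fun s _ => by
            simp only [hGdef]
            rw [intervalIntegral.integral_of_le (by norm_num : (0:ℝ) ≤ 1)]
  -- C: energy equals its initial value plus integral of G
  have h0T : (0:ℝ) ∈ Ico (0:ℝ) T := ⟨le_refl 0, hT⟩
  have hC : ∀ τ ∈ Ico (0:ℝ) T, F τ = F 0 + ∫ s in (0:ℝ)..τ, G s := by
    intro τ hτ
    have cgτ : Continuous fun x => g (x, τ) := hslice τ hτ g hg.continuousOn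
    have cg0 : Continuous fun x => g (x, 0) := hslice 0 h0T g hg.continuousOn
    have hsub : (∫ x in (0:ℝ)..1, (g (x, τ) ^ 2 - g (x, 0) ^ 2)) =
        (∫ x in (0:ℝ)..1, g (x, τ) ^ 2) - ∫ x in (0:ℝ)..1, g (x, 0) ^ 2 :=
      intervalIntegral.integral_sub ((cgτ.pow 2).intervalIntegrable 0 1)
        ((cg0.pow 2).intervalIntegrable 0 1)
    have := hC2 τ hτ
    rw [intervalIntegral.integral_congr (fun x (_ : x ∈ uIcc 0 1) => hC1 τ hτ x)] at this
    rw [hsub] at this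
    rw [hFg τ hτ, hFg 0 h0T]
    linarith
  -- Step D: conclude
  intro t ht
  set b : ℝ := (t + T) / 2 with hbdef
  have htb : t < b := by rw [hbdef]; linarith [ht.2]
  have hbT : b < T := by rw [hbdef]; linarith [ht.2]
  have hb0 : (0:ℝ) ≤ b := le_of_lt (lt_of_le_of_lt ht.1 htb)
  have hIccsub : Icc (0:ℝ) b ⊆ Ico 0 T := fun s hs => ⟨hs.1, lt_of_le_of_lt hs.2 hbT⟩
  -- continuity of G on Icc 0 b
  have hGcont : ContinuousOn G (Icc 0 b) := by
    intro s₀ hs₀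
    have hK : IsCompact (Icc (0:ℝ) 1 ×ˢ Icc (0:ℝ) b) := isCompact_Icc.prod isCompact_Icc
    have hKS : (Icc (0:ℝ) 1 ×ˢ Icc (0:ℝ) b) ⊆ S := fun p hp => ⟨mem_univ _, hIccsub hp.2⟩
    obtain ⟨C, hC⟩ := hK.exists_bound_of_continuousOn (cwS.mono hKS)
    refine intervalIntegral.continuousWithinAt_of_dominated_interval
      (F := fun s x => w (x, s)) (bound := fun _ => C) ?_ ?_ intervalIntegrable_const ?_
    · filter_upwards [self_mem_nhdsWithin] with s hs
      exact ((hslice s (hIccsub hs) w cwS)).aestronglyMeasurable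
    · filter_upwards [self_mem_nhdsWithin] with s hs
      refine ae_of_all _ fun x hx => ?_
      have hx' : x ∈ Icc (0:ℝ) 1 := Ioc_subset_Icc_self (by rwa [uIoc_of_le zero_le_one] at hx)
      exact hC (x, s) ⟨hx', hs⟩
    · refine ae_of_all _ fun x _ => ?_
      have : ContinuousOn (fun s => w (x, s)) (Icc 0 b) :=
        cwS.comp (Continuous.continuousOn (continuous_const.prodMk continuous_id))
          (fun s hs => ⟨mem_univ _, hIccsub hs⟩)
      exact this.continuousWithinAt hs₀
  have htmem : t ∈ Icc (0:ℝ) b := ⟨ht.1, htb.le⟩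
  have hGint : IntervalIntegrable G volume 0 t := by
    apply ContinuousOn.intervalIntegrable
    rw [uIcc_of_le ht.1]
    exact hGcont.mono (Icc_subset_Icc le_rfl htb.le)
  have hmeas : StronglyMeasurableAtFilter G (𝓝[Icc 0 b] t) volume :=
    ⟨Icc 0 b, self_mem_nhdsWithin, hGcont.aestronglyMeasurable measurableSet_Icc⟩
  haveI : Fact (t ∈ Icc (0:ℝ) b) := ⟨htmem⟩
  have hD : HasDerivWithinAt (fun τ => ∫ s in (0:ℝ)..τ, G s) (G t) (Icc 0 b) t :=
    intervalIntegral.integral_hasDerivWithinAt_right hGint hmeas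
      (hGcont.continuousWithinAt htmem)
  have hset : Icc (0:ℝ) b =ᶠ[𝓝 t] Ico (0:ℝ) T := by
    apply Filter.eventuallyEq_set.mpr
    filter_upwards [Iio_mem_nhds htb] with y hy
    simp only [mem_Icc, mem_Ico]
    constructor
    · rintro ⟨h1, _⟩; exact ⟨h1, lt_trans hy hbT⟩
    · rintro ⟨h1, _⟩; exact ⟨h1, le_of_lt hy⟩
  have hD' : HasDerivWithinAt (fun τ => ∫ s in (0:ℝ)..τ, G s) (G t) (Ico 0 T) t :=
    hD.congr_set hset
  have hD'' : HasDerivWithinAt (fun τ => F 0 + ∫ s in (0:ℝ)..τ, G s) (G t) (Ico 0 T) t :=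
    hD'.const_add (F 0)
  have hfinal : HasDerivWithinAt F (G t) (Ico 0 T) t :=
    hD''.congr (fun τ hτ => hC τ hτ) (hC t ht)
  have hGt : G t = (1 + 2 * lam) * ∫ x in (0:ℝ)..1, (deriv (fun y => u y t) x) ^ 3 := by
    have h1 : G t = (1 + 2 * lam) * ∫ x in (0:ℝ)..1, (g (x, t)) ^ 3 := keyB t ht
    rw [h1]
    congr 1
    exact intervalIntegral.integral_congr fun x _ => by rw [(claim1 x t ht).deriv]
  rw [← hGt]
  exact hfinal
end

section
/- Let λ ∈ [−1, 0), and let f : ℝ → ℝ be continuous, 1-periodic and non-constant with ∫₀¹ f(α) dα = 0; set m₀ = min_{[0,1]} f < 0 and η* = 1/(λ·m₀). For η ∈ (0, η*) and α ∈ [0,1] define J(α,η) = 1 − λ·η·f(α), K̄₀(η) = ∫₀¹ J(α,η)^(−1/λ) dα, K̄₁(η) = ∫₀¹ J(α,η)^(−1 − 1/λ) dα, and U(α,η) = (λ·η·K̄₀(η)^{2λ})^(−1) · ( J(α,η)^(−1) − K̄₁(η)/K̄₀(η) ). Then: (i) for every α̲ ∈ [0,1] with f(α̲) = m₀, U(α̲,η)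 → −∞ as η → η*⁻; and (ii) for every α ∈ [0,1] with f(α) > m₀, sup_{η ∈ (0,η*)} |U(α,η)| < ∞. -/
open Filter Topology Set

lemma interval_lt_aux (f : ℝ → ℝ) (hf : Continuous f) {x c : ℝ} (hx : x ∈ Icc (0:ℝ) 1)
    (hfx : f x < c) :
    ∃ a b : ℝ, 0 ≤ a ∧ a < b ∧ b ≤ 1 ∧ ∀ y ∈ Icc a b, f y < c := by
  have hopen : IsOpen (f ⁻¹' Iio c) := isOpen_Iio.preimage hf
  obtain ⟨ε, hε, hball⟩ := Metric.isOpen_iff.mp hopen x hfx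
  refine ⟨max 0 (x - ε/2), min 1 (x + ε/2), le_max_left _ _, ?_, min_le_left _ _, ?_⟩
  · rcases lt_or_eq_of_le hx.2 with h1 | h1
    · have hxa : max 0 (x - ε/2) ≤ x := max_le hx.1 (by linarith)
      have : x < min 1 (x + ε/2) := lt_min h1 (by linarith)
      linarith
    · have : max 0 (x - ε/2) < 1 := max_lt one_pos (by rw [h1]; linarith)
      have h2 : (1:ℝ) ≤ min 1 (x + ε/2) := le_min le_rfl (by rw [h1]; linarith)
      linarith
  · intro y hy
    have h1 : x - ε/2 ≤ y := le_trans (le_max_right _ _) hy.1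
    have h2 : y ≤ x + ε/2 := le_trans hy.2 (min_le_right _ _)
    have : y ∈ Metric.ball x ε := by
      rw [Metric.mem_ball, Real.dist_eq, abs_lt]; constructor <;> linarith
    exact hball this

lemma pos_interval (f : ℝ → ℝ) (hf : Continuous f)
    (hmean : (∫ α in (0:ℝ)..1, f α) = 0)
    {m₀ : ℝ} (hm₀ : IsLeast (f '' Icc 0 1) m₀) (hm₀neg : m₀ < 0) :
    ∃ a b : ℝ, 0 ≤ a ∧ a < b ∧ b ≤ 1 ∧ ∀ y ∈ Icc a b, 0 < f y := by
  -- first find a point with positive value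
  have hx₀ : ∃ x₀ ∈ Icc (0:ℝ) 1, 0 < f x₀ := by
    by_contra h
    push_neg at h
    obtain ⟨xm, hxm, hfxm⟩ := hm₀.1
    have hlt : f xm < m₀ / 2 := by rw [hfxm]; linarith
    obtain ⟨a, b, ha, hab, hb, hsmall⟩ := interval_lt_aux f hf hxm hlt
    have hint : ∀ u v : ℝ, IntervalIntegrable f MeasureTheory.volume u v :=
      fun u v => hf.intervalIntegrable u v
    have hIc : ∀ u v : ℝ, IntervalIntegrable (fun _ : ℝ => m₀/2) MeasureTheory.volume u v :=
      fun u v => intervalIntegrable_const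
    have h0 : ∀ u v : ℝ, IntervalIntegrable (fun _ : ℝ => (0:ℝ)) MeasureTheory.volume u v :=
      fun u v => intervalIntegrable_const
    have e1 : (∫ α in (0:ℝ)..a, f α) + (∫ α in a..b, f α) = ∫ α in (0:ℝ)..b, f α :=
      intervalIntegral.integral_add_adjacent_intervals (hint 0 a) (hint a b)
    have e2 : (∫ α in (0:ℝ)..b, f α) + (∫ α in b..1, f α) = ∫ α in (0:ℝ)..1, f α :=
      intervalIntegral.integral_add_adjacent_intervals (hint 0 b) (hint b 1)
    have b1 : (∫ α in (0:ℝ)..a, f α) ≤ ∫ α in (0:ℝ)..a, (0:ℝ) := by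
      apply intervalIntegral.integral_mono_on ha (hint 0 a) (h0 0 a)
      intro x hx
      exact h x ⟨hx.1, le_trans hx.2 (by linarith)⟩
    have b2 : (∫ α in a..b, f α) ≤ ∫ α in a..b, (m₀/2 : ℝ) := by
      apply intervalIntegral.integral_mono_on hab.le (hint a b) (hIc a b)
      intro x hx
      exact (hsmall x hx).le
    have b3 : (∫ α in b..1, f α) ≤ ∫ α in b..1, (0:ℝ) := by
      apply intervalIntegral.integral_mono_on hb (hint b 1) (h0 b 1)
      intro x hx
      exact h x ⟨le_trans (by linarith : (0:ℝ) ≤ b) hx.1, hx.2⟩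
    rw [intervalIntegral.integral_const, smul_zero] at b1 b3
    rw [intervalIntegral.integral_const, smul_eq_mul] at b2
    have : (b - a) * (m₀/2) < 0 := mul_neg_of_pos_of_neg (by linarith) (by linarith)
    linarith [hmean]
  obtain ⟨x₀, hx₀m, hx₀p⟩ := hx₀
  obtain ⟨a, b, ha, hab, hb, hsmall⟩ :=
    interval_lt_aux (fun x => -f x) (hf.neg) hx₀m (show -f x₀ < -(f x₀)/2 by linarith)
  refine ⟨a, b, ha, hab, hb, fun y hy => ?_⟩
  have := hsmall y hy
  linarith

/-- One-sided, discrete blow-up for `λ ∈ [-1,0)` (Theorem 4.4): along the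
representation formula `U(α,η)`, the value at any minimizer of `f` diverges
to `-∞` as `η → η*⁻`, while it stays bounded on `(0,η*)` at every other point. -/
theorem stmt17 (lam : ℝ) (hlam : lam ∈ Ico (-1 : ℝ) 0)
    (f : ℝ → ℝ) (hf : Continuous f) (hper : Function.Periodic f 1)
    (hnc : ∃ a b : ℝ, f a ≠ f b)
    (hmean : (∫ α in (0:ℝ)..1, f α) = 0)
    (m₀ : ℝ) (hm₀ : IsLeast (f '' Icc 0 1) m₀) (hm₀neg : m₀ < 0) :
    let ηstar : ℝ := 1 / (lam * m₀)
    let J : ℝ → ℝ → ℝ := fun α η => 1 - lam * η * f α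
    let K₀ : ℝ → ℝ := fun η => ∫ α in (0:ℝ)..1, J α η ^ (-1 / lam)
    let K₁ : ℝ → ℝ := fun η => ∫ α in (0:ℝ)..1, J α η ^ (-1 - 1 / lam)
    let U : ℝ → ℝ → ℝ := fun α η =>
      (lam * η * K₀ η ^ (2 * lam))⁻¹ * ((J α η)⁻¹ - K₁ η / K₀ η)
    (∀ αm ∈ Icc (0:ℝ) 1, f αm = m₀ →
        Tendsto (fun η => U αm η) (𝓝[<] ηstar) atBot) ∧
    (∀ α ∈ Icc (0:ℝ) 1, m₀ < f α →
        ∃ C : ℝ, ∀ η ∈ Ioo (0:ℝ) ηstar, |U α η| ≤ C) := by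
  intro ηstar J K₀ K₁ U
  have hηdef : ηstar = 1 / (lam * m₀) := rfl
  have hK₀def : ∀ η, K₀ η = ∫ α in (0:ℝ)..1, (1 - lam*η*f α) ^ (-1/lam) := fun _ => rfl
  have hK₁def : ∀ η, K₁ η = ∫ α in (0:ℝ)..1, (1 - lam*η*f α) ^ (-1 - 1/lam) := fun _ => rfl
  have hUdef : ∀ α η, U α η
      = (lam * η * K₀ η ^ (2*lam))⁻¹ * ((1 - lam*η*f α)⁻¹ - K₁ η / K₀ η) := fun _ _ => rfl
  clear_value ηstar J K₀ K₁ U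
  have hlam1 : (-1:ℝ) ≤ lam := hlam.1
  have hlamneg : lam < 0 := hlam.2
  have hlm : 0 < lam * m₀ := mul_pos_of_neg_of_neg hlamneg hm₀neg
  have hηs : 0 < ηstar := by rw [hηdef]; exact one_div_pos.mpr hlm
  have hflow : ∀ α ∈ Icc (0:ℝ) 1, m₀ ≤ f α := fun α hα => hm₀.2 ⟨α, hα, rfl⟩
  -- bound for |f| on [0,1]
  obtain ⟨F₀, hF₀⟩ := isCompact_Icc.exists_bound_of_continuousOn (hf.continuousOn (s := Icc (0:ℝ) 1))
  obtain ⟨F, hFdef⟩ : ∃ x : ℝ, x = max F₀ 1 := ⟨_, rfl⟩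
  have hF : ∀ α ∈ Icc (0:ℝ) 1, |f α| ≤ F := fun α hα =>
    hFdef ▸ le_trans (hF₀ α hα) (le_max_left _ _)
  have hF1 : (1:ℝ) ≤ F := hFdef ▸ le_max_right _ _
  have hFpos : (0:ℝ) < F := by linarith
  -- exponents
  have hp : (1:ℝ) ≤ -1/lam := by rw [le_div_iff_of_neg hlamneg]; linarith
  have hpnn : (0:ℝ) ≤ -1/lam := by linarith
  have hnd : (-1:ℝ)/lam = -(1/lam) := neg_div lam 1
  have hq : (0:ℝ) ≤ -1 - 1/lam := by linarith
  have h2lam : 2*lam < 0 := by linarith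
  -- positive interval for f
  obtain ⟨a, b, ha, hab, hb, hposf⟩ := pos_interval f hf hmean hm₀ hm₀neg
  obtain ⟨δ, hδdef⟩ : ∃ x : ℝ, x = b - a := ⟨_, rfl⟩
  have hδ : 0 < δ := by rw [hδdef]; linarith
  obtain ⟨CJ, hCJdef⟩ : ∃ x : ℝ, x = 1 + (-lam)*ηstar*F := ⟨_, rfl⟩
  have hCJ1 : (1:ℝ) ≤ CJ := by
    have h : 0 < (-lam)*ηstar*F := mul_pos (mul_pos (neg_pos.mpr hlamneg) hηs) hFpos
    rw [hCJdef]; linarith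
  have hCJpos : (0:ℝ) < CJ := by linarith
  -- pointwise positivity and bounds of J
  have hgpos : ∀ η ∈ Ioo (0:ℝ) ηstar, 0 < 1 - η*(lam*m₀) := by
    intro η hη
    have hηlt : η < 1/(lam*m₀) := hηdef ▸ hη.2
    have := (lt_div_iff₀ hlm).mp hηlt
    linarith
  have hJlow : ∀ η ∈ Ioo (0:ℝ) ηstar, ∀ α ∈ Icc (0:ℝ) 1,
      1 - η*(lam*m₀) ≤ 1 - lam*η*f α := by
    intro η hη α hα
    have h1 : lam*η ≤ 0 := mul_nonpos_of_nonpos_of_nonneg hlamneg.le hη.1.le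
    have h2 := mul_le_mul_of_nonpos_left (hflow α hα) h1
    have h3 : η*(lam*m₀) = lam*η*m₀ := by ring
    linarith
  have hJpos : ∀ η ∈ Ioo (0:ℝ) ηstar, ∀ α ∈ Icc (0:ℝ) 1, 0 < 1 - lam*η*f α :=
    fun η hη α hα => lt_of_lt_of_le (hgpos η hη) (hJlow η hη α hα)
  have hJup : ∀ η ∈ Ioo (0:ℝ) ηstar, ∀ α ∈ Icc (0:ℝ) 1, 1 - lam*η*f α ≤ CJ := by
    intro η hη α hα
    have hfa : f α ≤ F := le_of_abs_le (hF α hα)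
    have hl : 0 < -lam := by linarith
    have e1 : (-lam*η)*f α ≤ (-lam*η)*F :=
      mul_le_mul_of_nonneg_left hfa (mul_nonneg (by linarith) hη.1.le)
    have e2 : (-lam*η)*F ≤ (-lam*ηstar)*F := by nlinarith [hη.2, hη.1]
    have e0 : 1 - lam*η*f α = 1 + (-lam*η)*f α := by ring
    have e3 : CJ = 1 + (-lam*ηstar)*F := by rw [hCJdef]
    linarith
  -- integrability
  have hcont : ∀ (r : ℝ), 0 ≤ r → ∀ η u v : ℝ,
      IntervalIntegrable (fun α => (1 - lam*η*f α) ^ r) MeasureTheory.volume u v := by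
    intro r hr η u v
    apply ContinuousOn.intervalIntegrable
    exact ContinuousOn.rpow_const (Continuous.continuousOn (by fun_prop)) (fun x _ => Or.inr hr)
  -- bounds on K₀, K₁
  have hK0up : ∀ η ∈ Ioo (0:ℝ) ηstar, K₀ η ≤ CJ ^ (-1/lam) := by
    intro η hη
    rw [hK₀def]
    calc (∫ α in (0:ℝ)..1, (1 - lam*η*f α) ^ (-1/lam))
        ≤ ∫ _ in (0:ℝ)..1, CJ ^ (-1/lam) := by
          apply intervalIntegral.integral_mono_on zero_le_one (hcont _ hpnn η 0 1)
            intervalIntegrable_const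
          intro x hx
          exact Real.rpow_le_rpow (hJpos η hη x hx).le (hJup η hη x hx) hpnn
      _ = CJ ^ (-1/lam) := by simp
  have hK1up : ∀ η ∈ Ioo (0:ℝ) ηstar, K₁ η ≤ CJ ^ (-1 - 1/lam) := by
    intro η hη
    rw [hK₁def]
    calc (∫ α in (0:ℝ)..1, (1 - lam*η*f α) ^ (-1 - 1/lam))
        ≤ ∫ _ in (0:ℝ)..1, CJ ^ (-1 - 1/lam) := by
          apply intervalIntegral.integral_mono_on zero_le_one (hcont _ hq η 0 1)
            intervalIntegrable_const
          intro x hx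
          exact Real.rpow_le_rpow (hJpos η hη x hx).le (hJup η hη x hx) hq
      _ = CJ ^ (-1 - 1/lam) := by simp
  have hK1nn : ∀ η ∈ Ioo (0:ℝ) ηstar, 0 ≤ K₁ η := by
    intro η hη
    rw [hK₁def]
    apply intervalIntegral.integral_nonneg zero_le_one
    intro x hx
    exact Real.rpow_nonneg (hJpos η hη x hx).le _
  have hK0low : ∀ η ∈ Ioo (0:ℝ) ηstar, δ ≤ K₀ η := by
    intro η hη
    have ha1 : a ≤ 1 := le_trans hab.le hb
    have hb0 : 0 ≤ b := le_trans ha hab.le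
    have e1 := intervalIntegral.integral_add_adjacent_intervals
      (hcont _ hpnn η 0 a) (hcont _ hpnn η a b)
    have e2 := intervalIntegral.integral_add_adjacent_intervals
      (hcont _ hpnn η 0 b) (hcont _ hpnn η b 1)
    have b1 : (0:ℝ) ≤ ∫ α in (0:ℝ)..a, (1 - lam*η*f α) ^ (-1/lam) := by
      apply intervalIntegral.integral_nonneg ha
      intro x hx
      exact Real.rpow_nonneg (hJpos η hη x ⟨hx.1, hx.2.trans ha1⟩).le _
    have b3 : (0:ℝ) ≤ ∫ α in b..1, (1 - lam*η*f α) ^ (-1/lam) := by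
      apply intervalIntegral.integral_nonneg hb
      intro x hx
      exact Real.rpow_nonneg (hJpos η hη x ⟨le_trans hb0 hx.1, hx.2⟩).le _
    have b2 : δ ≤ ∫ α in a..b, (1 - lam*η*f α) ^ (-1/lam) := by
      have : (∫ _ in a..b, (1:ℝ)) ≤ ∫ α in a..b, (1 - lam*η*f α) ^ (-1/lam) := by
        apply intervalIntegral.integral_mono_on hab.le intervalIntegrable_const
          (hcont _ hpnn η a b)
        intro x hx
        have hfx : 0 < f x := hposf x hx
        have h1 : lam*η*f x ≤ 0 :=
          mul_nonpos_of_nonpos_of_nonneg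
            (mul_nonpos_of_nonpos_of_nonneg hlamneg.le hη.1.le) hfx.le
        calc (1:ℝ) = 1 ^ (-1/lam) := (Real.one_rpow _).symm
          _ ≤ (1 - lam*η*f x) ^ (-1/lam) :=
              Real.rpow_le_rpow zero_le_one (by linarith) hpnn
      rw [hδdef]
      simpa using this
    rw [hK₀def]
    linarith [e1, e2, b1, b2, b3]
  have hK0pos : ∀ η ∈ Ioo (0:ℝ) ηstar, 0 < K₀ η :=
    fun η hη => lt_of_lt_of_le hδ (hK0low η hη)
  -- difference bound
  have hdiff : ∀ η ∈ Ioo (0:ℝ) ηstar,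
      |K₁ η - K₀ η| ≤ CJ ^ (-1 - 1/lam) * ((-lam)*η*F) := by
    intro η hη
    have e : K₁ η - K₀ η = ∫ α in (0:ℝ)..1,
        ((1 - lam*η*f α) ^ (-1 - 1/lam) - (1 - lam*η*f α) ^ (-1/lam)) := by
      rw [hK₀def, hK₁def, intervalIntegral.integral_sub (hcont _ hq η 0 1) (hcont _ hpnn η 0 1)]
    rw [e]
    have hb : ∀ x ∈ Set.uIoc (0:ℝ) 1,
        ‖(1 - lam*η*f x) ^ (-1 - 1/lam) - (1 - lam*η*f x) ^ (-1/lam)‖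
          ≤ CJ ^ (-1 - 1/lam) * ((-lam)*η*F) := by
      intro x hx
      have hxm : x ∈ Icc (0:ℝ) 1 := by
        rw [uIoc_of_le zero_le_one] at hx; exact ⟨hx.1.le, hx.2⟩
      have hJx : 0 < 1 - lam*η*f x := hJpos η hη x hxm
      have hsplit : (1 - lam*η*f x) ^ (-1/lam)
          = (1 - lam*η*f x) ^ (-1 - 1/lam) * (1 - lam*η*f x) := by
        have h := Real.rpow_add hJx (-1 - 1/lam) 1
        rw [Real.rpow_one] at h
        rw [← h]
        congr 1
        ring
      rw [hsplit]
      have e2 : (1 - lam*η*f x) ^ (-1 - 1/lam)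
            - (1 - lam*η*f x) ^ (-1 - 1/lam) * (1 - lam*η*f x)
          = (1 - lam*η*f x) ^ (-1 - 1/lam) * (lam*η*f x) := by ring
      rw [e2]
      rw [Real.norm_eq_abs, abs_mul]
      have h1 : |(1 - lam*η*f x) ^ (-1 - 1/lam)| ≤ CJ ^ (-1 - 1/lam) := by
        rw [abs_of_nonneg (Real.rpow_nonneg hJx.le _)]
        exact Real.rpow_le_rpow hJx.le (hJup η hη x hxm) hq
      have h2 : |lam*η*f x| ≤ (-lam)*η*F := by
        rw [abs_mul, abs_mul, abs_of_neg hlamneg, abs_of_pos hη.1]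
        exact mul_le_mul_of_nonneg_left (hF x hxm) (mul_nonneg (by linarith) hη.1.le)
      have hnn : (0:ℝ) ≤ |lam*η*f x| := abs_nonneg _
      have hnn2 : (0:ℝ) ≤ CJ ^ (-1 - 1/lam) := Real.rpow_nonneg hCJpos.le _
      exact mul_le_mul h1 h2 hnn hnn2
    have := intervalIntegral.norm_integral_le_of_norm_le_const hb
    simpa using this
  constructor
  · -- blow-up at minimizers
    intro αm hαm hfαm
    simp only [hUdef]
    obtain ⟨A, hAdef⟩ : ∃ x : ℝ, x = (-lam) * ηstar * δ ^ (2*lam) := ⟨_, rfl⟩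
    have hA : 0 < A := by
      rw [hAdef]
      exact mul_pos (mul_pos (neg_pos.mpr hlamneg) hηs) (Real.rpow_pos_of_pos hδ _)
    obtain ⟨B, hBdef⟩ : ∃ x : ℝ, x = CJ ^ (-1 - 1/lam) / δ := ⟨_, rfl⟩
    have hP : ∀ η ∈ Ioo (0:ℝ) ηstar, (lam*η*K₀ η ^ (2*lam))⁻¹ ≤ -A⁻¹ := by
      intro η hη
      have hKpow : 0 < K₀ η ^ (2*lam) := Real.rpow_pos_of_pos (hK0pos η hη) _
      have hxneg : lam*η*K₀ η ^ (2*lam) < 0 :=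
        mul_neg_of_neg_of_pos (mul_neg_of_neg_of_pos hlamneg hη.1) hKpow
      have hKd : K₀ η ^ (2*lam) ≤ δ ^ (2*lam) :=
        Real.rpow_le_rpow_of_nonpos hδ (hK0low η hη) h2lam.le
      have hxA : -(lam*η*K₀ η ^ (2*lam)) ≤ A := by
        have h1 : (-lam)*η*(K₀ η ^ (2*lam)) ≤ (-lam)*η*(δ ^ (2*lam)) :=
          mul_le_mul_of_nonneg_left hKd (mul_nonneg (by linarith) hη.1.le)
        have h2 : (-lam)*η*(δ ^ (2*lam)) ≤ (-lam)*ηstar*(δ ^ (2*lam)) := by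
          have hd : 0 < δ ^ (2*lam) := Real.rpow_pos_of_pos hδ _
          nlinarith [hη.2]
        have h3 : -(lam*η*K₀ η ^ (2*lam)) = (-lam)*η*(K₀ η ^ (2*lam)) := by ring
        rw [hAdef]; linarith
      have h4 := inv_anti₀ (neg_pos.mpr hxneg) hxA
      rw [inv_neg] at h4
      linarith
    have hB : ∀ η ∈ Ioo (0:ℝ) ηstar, K₁ η / K₀ η ≤ B := by
      intro η hη
      rw [hBdef]
      exact div_le_div₀ (Real.rpow_nonneg hCJpos.le _) (hK1up η hη) hδ (hK0low η hη)
    have hgt : Tendsto (fun η => (1 - η*(lam*m₀))⁻¹) (𝓝[<] ηstar) atTop := by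
      apply tendsto_inv_nhdsGT_zero.comp
      apply tendsto_nhdsWithin_of_tendsto_nhds_of_eventually_within
      · have hc : Continuous (fun η : ℝ => 1 - η*(lam*m₀)) := by fun_prop
        have h0 : 1 - ηstar*(lam*m₀) = 0 := by
          rw [hηdef]; field_simp
          rw [div_self hlm.ne', sub_self]
        have := hc.tendsto ηstar
        rw [h0] at this
        exact this.mono_left nhdsWithin_le_nhds
      · filter_upwards [eventually_mem_nhdsWithin] with η hη
        have hηlt : η < 1/(lam*m₀) := hηdef ▸ hη
        have := (lt_div_iff₀ hlm).mp hηlt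
        simp only [mem_Ioi]
        linarith
    have hgt2 : Tendsto (fun η => -A⁻¹ * ((1 - η*(lam*m₀))⁻¹ - B)) (𝓝[<] ηstar) atBot := by
      apply Filter.Tendsto.neg_mul_atTop (show -A⁻¹ < 0 by
        have := inv_pos.mpr hA; linarith) tendsto_const_nhds
      have := tendsto_atTop_add_const_right (𝓝[<] ηstar) (-B) hgt
      simpa [sub_eq_add_neg] using this
    apply tendsto_atBot_mono' _ _ hgt2
    filter_upwards [Ioo_mem_nhdsLT hηs, hgt.eventually_ge_atTop B] with η hη hBle
    have hJm : 1 - lam*η*f αm = 1 - η*(lam*m₀) := by rw [hfαm]; ring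
    have hKpow : 0 < K₀ η ^ (2*lam) := Real.rpow_pos_of_pos (hK0pos η hη) _
    have hxneg : lam*η*K₀ η ^ (2*lam) < 0 :=
      mul_neg_of_neg_of_pos (mul_neg_of_neg_of_pos hlamneg hη.1) hKpow
    have step1 : (lam*η*K₀ η ^ (2*lam))⁻¹ * ((1 - η*(lam*m₀))⁻¹ - K₁ η / K₀ η)
        ≤ (lam*η*K₀ η ^ (2*lam))⁻¹ * ((1 - η*(lam*m₀))⁻¹ - B) := by
      apply mul_le_mul_of_nonpos_left _ (inv_nonpos.mpr hxneg.le)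
      have := hB η hη
      linarith
    have step2 : (lam*η*K₀ η ^ (2*lam))⁻¹ * ((1 - η*(lam*m₀))⁻¹ - B)
        ≤ -A⁻¹ * ((1 - η*(lam*m₀))⁻¹ - B) :=
      mul_le_mul_of_nonneg_right (hP η hη) (by linarith)
    calc (lam * η * K₀ η ^ (2*lam))⁻¹ * ((1 - lam*η*f αm)⁻¹ - K₁ η / K₀ η)
        = (lam*η*K₀ η ^ (2*lam))⁻¹ * ((1 - η*(lam*m₀))⁻¹ - K₁ η / K₀ η) := by rw [hJm]
      _ ≤ -A⁻¹ * ((1 - η*(lam*m₀))⁻¹ - B) := le_trans step1 step2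
  · -- boundedness elsewhere
    intro α hα hfα
    obtain ⟨cα, hcαdef⟩ : ∃ x : ℝ, x = min 1 ((m₀ - f α)/m₀) := ⟨_, rfl⟩
    have hcα : 0 < cα := by
      rw [hcαdef]
      apply lt_min one_pos
      exact div_pos_iff.mpr (Or.inr ⟨by linarith, hm₀neg⟩)
    have hJα : ∀ η ∈ Ioo (0:ℝ) ηstar, cα ≤ 1 - lam*η*f α := by
      intro η hη
      rcases le_or_gt 0 (f α) with hc | hc
      · have h1 : lam*η*f α ≤ 0 :=
          mul_nonpos_of_nonpos_of_nonneg
            (mul_nonpos_of_nonpos_of_nonneg hlamneg.le hη.1.le) hc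
        have hcc : cα ≤ 1 := hcαdef ▸ min_le_left (1:ℝ) ((m₀ - f α)/m₀)
        linarith
      · have hlf : 0 < lam * f α := mul_pos_of_neg_of_neg hlamneg hc
        have hkey : lam*η*f α ≤ lam*ηstar*f α := by nlinarith [hη.2, hη.1]
        have hm0 : m₀ ≠ 0 := hm₀neg.ne
        have heq : lam*ηstar*f α = f α / m₀ := by
          rw [hηdef]
          field_simp
          ring
          rw [mul_comm lam, mul_assoc, mul_inv_cancel₀ hlamneg.ne, mul_one]
        have heq2 : (m₀ - f α)/m₀ = 1 - f α/m₀ := by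
          rw [sub_div, div_self hm0]
        have hcc : cα ≤ (m₀ - f α)/m₀ := hcαdef ▸ min_le_right (1:ℝ) ((m₀ - f α)/m₀)
        linarith
    obtain ⟨E, hEdef⟩ : ∃ x : ℝ, x = F/cα + CJ ^ (-1 - 1/lam) * F / δ := ⟨_, rfl⟩
    have hE : 0 ≤ E := by
      have h : (0:ℝ) ≤ CJ ^ (-1 - 1/lam) := Real.rpow_nonneg hCJpos.le _
      rw [hEdef]
      have h1 : 0 ≤ F/cα := div_nonneg hFpos.le hcα.le
      have h2 : 0 ≤ CJ ^ (-1 - 1/lam) * F / δ :=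
        div_nonneg (mul_nonneg h hFpos.le) hδ.le
      linarith
    refine ⟨((CJ ^ (-1/lam)) ^ (2*lam))⁻¹ * E, ?_⟩
    intro η hη
    rw [hUdef]
    have hJ := hJα η hη
    have hJp : 0 < 1 - lam*η*f α := lt_of_lt_of_le hcα hJ
    have hK0p := hK0pos η hη
    have hKpow : 0 < K₀ η ^ (2*lam) := Real.rpow_pos_of_pos hK0p _
    have hxneg : lam*η*K₀ η ^ (2*lam) < 0 :=
      mul_neg_of_neg_of_pos (mul_neg_of_neg_of_pos hlamneg hη.1) hKpow
    -- numerator bounds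
    have n1 : |(1 - lam*η*f α)⁻¹ - 1| ≤ ((-lam)*η*F)/cα := by
      have e : (1 - lam*η*f α)⁻¹ - 1 = (lam*η*f α)/(1 - lam*η*f α) := by
        field_simp
        ring
      rw [e, abs_div, abs_of_pos hJp]
      apply div_le_div₀ (mul_nonneg (mul_nonneg (by linarith) hη.1.le) hFpos.le) _ hcα hJ
      rw [abs_mul, abs_mul, abs_of_neg hlamneg, abs_of_pos hη.1]
      exact mul_le_mul_of_nonneg_left (hF α hα) (mul_nonneg (by linarith) hη.1.le)
    have n2 : |(K₀ η - K₁ η)/K₀ η| ≤ (CJ ^ (-1 - 1/lam) * ((-lam)*η*F))/δ := by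
      rw [abs_div, abs_of_pos hK0p]
      apply div_le_div₀ _ _ hδ (hK0low η hη)
      · exact mul_nonneg (Real.rpow_nonneg hCJpos.le _)
          (mul_nonneg (mul_nonneg (by linarith) hη.1.le) hFpos.le)
      · rw [abs_sub_comm]; exact hdiff η hη
    have hNeq : (1 - lam*η*f α)⁻¹ - K₁ η / K₀ η
        = ((1 - lam*η*f α)⁻¹ - 1) + (K₀ η - K₁ η)/K₀ η := by
      rw [sub_div, div_self (hK0pos η hη).ne']
      ring
    have hN : |(1 - lam*η*f α)⁻¹ - K₁ η / K₀ η| ≤ (-lam)*η*E := by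
      rw [hNeq]
      have htri := abs_add_le ((1 - lam*η*f α)⁻¹ - 1) ((K₀ η - K₁ η)/K₀ η)
      have heq : ((-lam)*η*F)/cα + (CJ ^ (-1 - 1/lam) * ((-lam)*η*F))/δ
          = (-lam)*η*E := by rw [hEdef]; ring
      linarith
    have habsx : |lam*η*K₀ η ^ (2*lam)| = (-lam)*η*K₀ η ^ (2*lam) := by
      rw [abs_of_neg hxneg]; ring
    rw [abs_mul, abs_inv, habsx]
    have hle1 : ((-lam)*η*K₀ η ^ (2*lam))⁻¹ * |(1 - lam*η*f α)⁻¹ - K₁ η / K₀ η|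
        ≤ ((-lam)*η*K₀ η ^ (2*lam))⁻¹ * ((-lam)*η*E) := by
      apply mul_le_mul_of_nonneg_left hN
      exact inv_nonneg.mpr (mul_nonneg (mul_nonneg (by linarith) hη.1.le) hKpow.le)
    have hcancel : ((-lam)*η*K₀ η ^ (2*lam))⁻¹ * ((-lam)*η*E)
        = (K₀ η ^ (2*lam))⁻¹ * E := by
      have h1 : (-lam)*η ≠ 0 :=
        (mul_pos (neg_pos.mpr hlamneg) hη.1).ne'
      have key : ((-lam)*η)⁻¹ * ((-lam)*η) = 1 := inv_mul_cancel₀ h1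
      calc ((-lam)*η*K₀ η ^ (2*lam))⁻¹ * ((-lam)*η*E)
          = (((-lam)*η)⁻¹ * ((-lam)*η)) * ((K₀ η ^ (2*lam))⁻¹ * E) := by
            rw [mul_inv]; ring
        _ = (K₀ η ^ (2*lam))⁻¹ * E := by rw [key, one_mul]
    have hfin : (K₀ η ^ (2*lam))⁻¹ * E ≤ ((CJ ^ (-1/lam)) ^ (2*lam))⁻¹ * E := by
      apply mul_le_mul_of_nonneg_right _ hE
      apply inv_anti₀
      · exact Real.rpow_pos_of_pos (Real.rpow_pos_of_pos hCJpos _) _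
      · exact Real.rpow_le_rpow_of_nonpos hK0p (hK0up η hη) h2lam.le
    calc ((-lam)*η*K₀ η ^ (2*lam))⁻¹ * |(1 - lam*η*f α)⁻¹ - K₁ η / K₀ η|
        ≤ ((-lam)*η*K₀ η ^ (2*lam))⁻¹ * ((-lam)*η*E) := hle1
      _ = (K₀ η ^ (2*lam))⁻¹ * E := hcancel
      _ ≤ ((CJ ^ (-1/lam)) ^ (2*lam))⁻¹ * E := hfin
end
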